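/- arXiv:2007.13507 — 6 statements merged into one kernel-verified Lean document; each statement's English description precedes it below -/
import Mathlib

section
/- Let ξ be a real random variable with long-tailed distribution F (i.e., P(ξ > x) > 0 for all x and P(ξ > x - y)/P(ξ > x) → 1 as x → ∞ for every fixed y), and let A = 1/(1 + e^ξ) ∈ (0,1). Then E[(1-A)^m] ∼ P(ξ > log m) as m → ∞, i.e., the ratio E[(1-A)^m]/F̄(log m) tends to 1. -/
open MeasureTheory Filter

/-- A tail function `F̄` is long-tailed if it is everywhere positive and
`F̄(x-y) ∼ F̄(x)` as `x → ∞` for every fixed `y`. -/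
def IsLongTailedFun (Fbar : ℝ → ℝ) : Prop :=
  (∀ x, 0 < Fbar x) ∧
    ∀ y : ℝ, Tendsto (fun x => Fbar (x - y) / Fbar x) atTop (nhds 1)

lemma aux_cast_lt_two_pow (n : ℕ) : (n : ℝ) + 1 ≤ 2 ^ n := by
  have h := Nat.lt_two_pow_self (n := n)
  have h2 : (n : ℝ) + 1 ≤ ((2 ^ n : ℕ) : ℝ) := by exact_mod_cast h
  simpa using h2

lemma aux_pt_upper (m : ℕ) {x B : ℝ} (hx : x ≤ B) (hB : 0 ≤ B) :
    ((1 + Real.exp (-x))⁻¹) ^ m ≤ Real.exp (-(m : ℝ) / (2 * Real.exp B)) := by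
  set t := Real.exp (-x) with ht
  have ht0 : 0 < t := Real.exp_pos _
  have h1t : (0:ℝ) < 1 + t := by linarith
  have h1 : (1 + t)⁻¹ ≤ Real.exp (-(t / (1 + t))) := by
    have h := Real.add_one_le_exp (-(t / (1 + t)))
    have he : (1 + t)⁻¹ = -(t / (1 + t)) + 1 := by field_simp; ring
    linarith [he ▸ h]
  have h2 : ((1 + t)⁻¹) ^ m ≤ Real.exp (-(t / (1 + t))) ^ m :=
    pow_le_pow_left₀ (by positivity) h1 m
  have h3 : Real.exp (-(t / (1 + t))) ^ m = Real.exp (-((m : ℝ) * (t / (1 + t)))) := by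
    rw [← Real.exp_nat_mul]; ring_nf
  have hex : 0 < Real.exp x := Real.exp_pos _
  have hfrac : (2 * Real.exp B)⁻¹ ≤ t / (1 + t) := by
    have hte : t / (1 + t) = (Real.exp x + 1)⁻¹ := by
      rw [ht, Real.exp_neg]; field_simp
    rw [hte]
    apply inv_anti₀ (by positivity)
    have hxB : Real.exp x ≤ Real.exp B := Real.exp_le_exp.2 hx
    have h1B : (1:ℝ) ≤ Real.exp B := by simpa using Real.exp_le_exp.2 hB
    linarith
  have h4 : (m : ℝ) / (2 * Real.exp B) ≤ (m : ℝ) * (t / (1 + t)) := by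
    rw [div_eq_mul_inv]
    exact mul_le_mul_of_nonneg_left hfrac (Nat.cast_nonneg m)
  calc ((1 + t)⁻¹) ^ m ≤ Real.exp (-((m : ℝ) * (t / (1 + t)))) := h3 ▸ h2
    _ ≤ Real.exp (-(m : ℝ) / (2 * Real.exp B)) := by
        rw [Real.exp_le_exp, neg_div]; linarith

lemma aux_pt_lower (m : ℕ) (hm : 1 ≤ m) {x c : ℝ} (hx : Real.log m + c ≤ x) :
    Real.exp (-Real.exp (-c)) ≤ ((1 + Real.exp (-x))⁻¹) ^ m := by
  set t := Real.exp (-x) with ht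
  have ht0 : 0 < t := Real.exp_pos _
  have hm0 : (0:ℝ) < m := by exact_mod_cast hm
  have h1 : (1 + t) ^ m ≤ Real.exp ((m : ℝ) * t) := by
    calc (1 + t) ^ m ≤ Real.exp t ^ m := by
          apply pow_le_pow_left₀ (by linarith)
          linarith [Real.add_one_le_exp t]
      _ = Real.exp ((m : ℝ) * t) := by rw [← Real.exp_nat_mul]
  have h2 : (m : ℝ) * t ≤ Real.exp (-c) := by
    have hle : t ≤ Real.exp (-(Real.log m + c)) := Real.exp_le_exp.2 (by linarith)
    have he : Real.exp (-(Real.log m + c)) = (Real.exp (-c)) / m := by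
      rw [neg_add, Real.exp_add, Real.exp_neg (Real.log m), Real.exp_log hm0]
      ring
    calc (m : ℝ) * t ≤ (m : ℝ) * ((Real.exp (-c)) / m) := by
          apply mul_le_mul_of_nonneg_left _ (le_of_lt hm0); rw [← he]; exact hle
      _ = Real.exp (-c) := by field_simp
  have h3 : (1 + t) ^ m ≤ Real.exp (Real.exp (-c)) :=
    h1.trans (Real.exp_le_exp.2 h2)
  rw [inv_pow]
  calc Real.exp (-Real.exp (-c)) = (Real.exp (Real.exp (-c)))⁻¹ := by rw [Real.exp_neg]
    _ ≤ ((1 + t) ^ m)⁻¹ := inv_anti₀ (by positivity) h3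

lemma aux_F_lower (Fbar : ℝ → ℝ) (hlong : IsLongTailedFun Fbar) (hFanti : Antitone Fbar) :
    ∃ x₁ C : ℝ, 0 < C ∧ ∀ x ≥ x₁, C * Real.exp (-x / 4) ≤ Fbar x := by
  have h14 : (1:ℝ) < Real.exp (1/4) := by
    nlinarith [Real.add_one_le_exp (1/4 : ℝ)]
  obtain ⟨x₁, hx₁⟩ := eventually_atTop.1 ((hlong.2 1).eventually_le_const h14)
  have hstep : ∀ x ≥ x₁, Fbar (x - 1) ≤ Real.exp (1/4) * Fbar x := by
    intro x hx
    have := hx₁ x hx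
    rw [div_le_iff₀ (hlong.1 x)] at this
    linarith
  have hn : ∀ n : ℕ, Real.exp (-(n : ℝ) / 4) * Fbar x₁ ≤ Fbar (x₁ + n) := by
    intro n
    induction n with
    | zero => simp
    | succ n ih =>
      have h1 := hstep (x₁ + ((n:ℝ) + 1)) (by linarith [Nat.cast_nonneg (α := ℝ) n])
      have he : x₁ + ((n:ℝ) + 1) - 1 = x₁ + n := by ring
      rw [he] at h1
      have goalcast : ((n+1:ℕ):ℝ) = (n:ℝ)+1 := by push_cast; ring
      rw [goalcast]
      have h2 := ih.trans h1
      have hexp : Real.exp (-((n:ℝ)+1)/4) = (Real.exp (1/4))⁻¹ * Real.exp (-(n:ℝ)/4) := by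
        rw [← Real.exp_neg, ← Real.exp_add]; ring_nf
      rw [hexp, mul_assoc, inv_mul_le_iff₀ (Real.exp_pos _)]
      exact h2
  refine ⟨x₁, Real.exp ((x₁ - 1) / 4) * Fbar x₁, mul_pos (Real.exp_pos _) (hlong.1 x₁), ?_⟩
  intro x hx
  set n := ⌈x - x₁⌉₊ with hndef
  have hxn : x ≤ x₁ + n := by
    have := Nat.le_ceil (x - x₁)
    linarith
  have hnle : (n : ℝ) ≤ x - x₁ + 1 := by
    have := Nat.ceil_lt_add_one (by linarith : (0:ℝ) ≤ x - x₁)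
    linarith
  calc Real.exp ((x₁ - 1) / 4) * Fbar x₁ * Real.exp (-x / 4)
      ≤ Real.exp (-(n : ℝ) / 4) * Fbar x₁ := by
        rw [mul_comm _ (Fbar x₁), mul_assoc, ← Real.exp_add, mul_comm (Fbar x₁)]
        apply mul_le_mul_of_nonneg_right _ (le_of_lt (hlong.1 x₁))
        rw [Real.exp_le_exp]
        linarith
    _ ≤ Fbar (x₁ + n) := hn n
    _ ≤ Fbar x := hFanti hxn

lemma aux_small (Fbar : ℝ → ℝ) (hlong : IsLongTailedFun Fbar) (hFanti : Antitone Fbar)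
    {a ε' : ℝ} (ha : 0 < a) (hε' : 0 < ε') :
    ∀ᶠ m : ℕ in atTop, Real.exp (-(m : ℝ) * a) ≤ ε' * Fbar (Real.log m) := by
  obtain ⟨x₁, C, hC, hF⟩ := aux_F_lower Fbar hlong hFanti
  have hlog : Tendsto (fun m : ℕ => Real.log m) atTop atTop :=
    Real.tendsto_log_atTop.comp tendsto_natCast_atTop_atTop
  have hkey : Tendsto (fun m : ℕ => (m : ℝ) * Real.exp (-((m : ℝ) * a))) atTop (nhds 0) := by
    have t1 : Tendsto (fun y : ℝ => a⁻¹ * (y ^ 1 * Real.exp (-y))) atTop (nhds 0) := by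
      simpa using (Real.tendsto_pow_mul_exp_neg_atTop_nhds_zero 1).const_mul a⁻¹
    have t2 : Tendsto (fun m : ℕ => (m : ℝ) * a) atTop atTop :=
      Tendsto.atTop_mul_const ha tendsto_natCast_atTop_atTop
    have h3 := t1.comp t2
    refine h3.congr fun m => ?_
    simp only [Function.comp_apply, pow_one]
    field_simp
  have h1 : ∀ᶠ m : ℕ in atTop, (m : ℝ) * Real.exp (-((m : ℝ) * a)) ≤ ε' * C :=
    hkey.eventually_le_const (by positivity)
  filter_upwards [h1, hlog.eventually (eventually_ge_atTop x₁),
    eventually_ge_atTop 1] with m hm hx₁m hm1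
  have hm0 : (0:ℝ) < m := by exact_mod_cast hm1
  have hlogm : (0:ℝ) ≤ Real.log m := Real.log_nonneg (by exact_mod_cast hm1)
  have hFm : C / m ≤ Fbar (Real.log m) := by
    have hflow := hF (Real.log m) hx₁m
    have h2 : Real.exp (-(Real.log m)) ≤ Real.exp (-(Real.log m) / 4) := by
      rw [Real.exp_le_exp]; linarith
    have h3 : Real.exp (-(Real.log m)) = (m : ℝ)⁻¹ := by
      rw [Real.exp_neg, Real.exp_log hm0]
    calc C / m = C * (m:ℝ)⁻¹ := by ring
      _ = C * Real.exp (-(Real.log m)) := by rw [h3]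
      _ ≤ C * Real.exp (-(Real.log m) / 4) := by
          apply mul_le_mul_of_nonneg_left h2 (le_of_lt hC)
      _ ≤ Fbar (Real.log m) := by
          have he : -(Real.log m) / 4 = -(Real.log m / 4) := by ring
          calc C * Real.exp (-(Real.log m) / 4)
              = C * Real.exp (-(Real.log m) / 4) := rfl
            _ ≤ Fbar (Real.log m) := hflow
  calc Real.exp (-(m : ℝ) * a) = (m:ℝ)⁻¹ * ((m:ℝ) * Real.exp (-((m:ℝ) * a))) := by
        field_simp
    _ ≤ (m:ℝ)⁻¹ * (ε' * C) := by
        apply mul_le_mul_of_nonneg_left hm (by positivity)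
    _ = ε' * (C / m) := by ring
    _ ≤ ε' * Fbar (Real.log m) := mul_le_mul_of_nonneg_left hFm (le_of_lt hε')

set_option maxHeartbeats 1000000 in
/-- If `ξ` has a long-tailed distribution and `A = 1/(1+e^ξ)`, then
`E[(1-A)^m] ∼ F̄(log m)` as `m → ∞`. -/
theorem expectation_one_sub_A_pow_asymp {Ω : Type*} [MeasurableSpace Ω]
    (μ : Measure Ω) [IsProbabilityMeasure μ]
    (ξ : Ω → ℝ) (hξ : Measurable ξ)
    (Fbar : ℝ → ℝ) (hFbar : ∀ x, Fbar x = (μ {ω | x < ξ ω}).toReal)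
    (hlong : IsLongTailedFun Fbar)
    (A : Ω → ℝ) (hA : ∀ ω, A ω = 1 / (1 + Real.exp (ξ ω))) :
    Tendsto (fun m : ℕ => (∫ ω, (1 - A ω) ^ m ∂μ) / Fbar (Real.log m))
      atTop (nhds 1) := by
  obtain ⟨hFpos, hFlim⟩ := hlong
  have hFanti : Antitone Fbar := by
    intro x y hxy
    rw [hFbar, hFbar]
    exact ENNReal.toReal_mono (measure_ne_top μ _)
      (measure_mono fun ω h => lt_of_le_of_lt hxy h)
  set g : Ω → ℝ := fun ω => (1 + Real.exp (-(ξ ω)))⁻¹ with hgdef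
  have hg_pos : ∀ ω, 0 < g ω := fun ω => by
    rw [hgdef]; positivity
  have hg_le1 : ∀ ω, g ω ≤ 1 := fun ω => by
    rw [hgdef]
    exact inv_le_one_of_one_le₀ (by linarith [Real.exp_pos (-(ξ ω))])
  have hg_eq : ∀ ω, 1 - A ω = g ω := by
    intro ω
    rw [hA, hgdef]
    simp only
    rw [Real.exp_neg]
    have h1 : (0:ℝ) < 1 + Real.exp (ξ ω) := by positivity
    have h2 : Real.exp (ξ ω) ≠ 0 := (Real.exp_pos _).ne'
    field_simp
    ring
  have hgm : Measurable g := by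
    rw [hgdef]
    exact (measurable_const.add (Real.measurable_exp.comp hξ.neg)).inv
  have hInt : ∀ m : ℕ, Integrable (fun ω => g ω ^ m) μ := by
    intro m
    apply Integrable.mono' (integrable_const (1:ℝ)) ((hgm.pow_const m).aestronglyMeasurable)
    filter_upwards with ω
    rw [Real.norm_eq_abs, abs_of_nonneg (by positivity)]
    exact pow_le_one₀ (le_of_lt (hg_pos ω)) (hg_le1 ω)
  have hIntRw : ∀ m : ℕ, (∫ ω, (1 - A ω) ^ m ∂μ) = ∫ ω, g ω ^ m ∂μ := by
    intro m
    apply integral_congr_ae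
    filter_upwards with ω
    rw [hg_eq ω]
  have hms : ∀ a : ℝ, MeasurableSet {ω | a < ξ ω} :=
    fun a => measurableSet_lt measurable_const hξ
  have hms2 : ∀ a b : ℝ, MeasurableSet {ω | a < ξ ω ∧ ξ ω ≤ b} := fun a b =>
    (measurableSet_lt measurable_const hξ).inter (measurableSet_le hξ measurable_const)
  have hμle : ∀ {s t : Set Ω}, s ⊆ t → (μ s).toReal ≤ (μ t).toReal :=
    fun h => ENNReal.toReal_mono (measure_ne_top μ _) (measure_mono h)
  have hμ1 : ∀ s : Set Ω, (μ s).toReal ≤ 1 := by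
    intro s
    have h := prob_le_one (μ := μ) (s := s)
    calc (μ s).toReal ≤ (1 : ENNReal).toReal := ENNReal.toReal_mono ENNReal.one_ne_top h
      _ = 1 := by simp
  have hub : ∀ (m : ℕ) (s : Set Ω) (C : ℝ), MeasurableSet s → (∀ ω ∈ s, g ω ^ m ≤ C) →
      ∫ ω in s, g ω ^ m ∂μ ≤ C * (μ s).toReal := by
    intro m s C hs hC
    have h := norm_setIntegral_le_of_norm_le_const (μ := μ) (s := s)
      (f := fun ω => g ω ^ m) (measure_lt_top μ s) (fun ω hω => by
        rw [Real.norm_eq_abs, abs_of_nonneg (by positivity)]; exact hC ω hω)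
    rw [Real.norm_eq_abs] at h
    exact (le_abs_self _).trans h
  rw [Metric.tendsto_nhds]
  intro ε hε
  set ε' := min (ε/2) (1/2) with hε'def
  have hε'pos : 0 < ε' := lt_min (by linarith) one_half_pos
  have hε'le : ε' ≤ 1/2 := min_le_right _ _
  have hε'lt : ε' < ε := lt_of_le_of_lt (min_le_left _ _) (by linarith)
  -- choose c
  have hc_ev : ∀ᶠ c : ℝ in atTop, (1:ℝ) ≤ c ∧ Real.exp (-c) ≤ ε'/2 ∧
      2 * Real.exp (-(Real.exp c / 2)) ≤ min (1/2) (ε'/12) := by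
    have t1 : Tendsto (fun c : ℝ => Real.exp (-c)) atTop (nhds 0) :=
      Real.tendsto_exp_neg_atTop_nhds_zero
    have t2 : Tendsto (fun c : ℝ => 2 * Real.exp (-(Real.exp c / 2))) atTop (nhds 0) := by
      have h := Real.tendsto_exp_neg_atTop_nhds_zero.comp
        (Real.tendsto_exp_atTop.atTop_div_const (by norm_num : (0:ℝ) < 2))
      have h2 := h.const_mul (2:ℝ)
      simpa using h2
    filter_upwards [eventually_ge_atTop 1,
      t1.eventually_le_const (by positivity : (0:ℝ) < ε'/2),
      t2.eventually_le_const (by positivity : (0:ℝ) < min (1/2 : ℝ) (ε'/12))] with c h1 h2 h3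
    exact ⟨h1, h2, h3⟩
  obtain ⟨c, hc1, hcε, hcr⟩ := hc_ev.exists
  set r := 2 * Real.exp (-(Real.exp c / 2)) with hrdef
  have hr0 : 0 ≤ r := by positivity
  have hr_half : r ≤ 1/2 := hcr.trans (min_le_left _ _)
  have hr12 : r ≤ ε'/12 := hcr.trans (min_le_right _ _)
  have hc0 : (0:ℝ) < c := lt_of_lt_of_le one_pos hc1
  have hec2 : (2:ℝ) ≤ Real.exp c := by
    have := Real.add_one_le_exp c
    linarith
  -- upper shift constant
  have hδ : (1:ℝ) < 1 + ε'/3 := by linarith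
  obtain ⟨x₀', hx₀'⟩ := eventually_atTop.1 ((hFlim c).eventually_le_const hδ)
  set x₀ := max x₀' 0 with hx₀def
  have hx₀0 : (0:ℝ) ≤ x₀ := le_max_right _ _
  have hshift : ∀ x ≥ x₀, Fbar (x - c) ≤ (1 + ε'/3) * Fbar x := by
    intro x hx
    have h := hx₀' x (le_trans (le_max_left _ _) hx)
    rw [div_le_iff₀ (hFpos x)] at h
    linarith
  -- lower shift
  have hlow_ev : ∀ᶠ x : ℝ in atTop, (1 - ε'/2) * Fbar x ≤ Fbar (x + c) := by
    have h := (hFlim (-c)).eventually_const_le (by linarith : 1 - ε'/2 < 1)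
    filter_upwards [h] with x hx
    have he : x - (-c) = x + c := by ring
    rw [he, le_div_iff₀ (hFpos x)] at hx
    linarith
  have hlogm : Tendsto (fun m : ℕ => Real.log m) atTop atTop :=
    Real.tendsto_log_atTop.comp tendsto_natCast_atTop_atTop
  have hsm := aux_small Fbar ⟨hFpos, hFlim⟩ hFanti
    (a := (2 * Real.exp x₀)⁻¹) (ε' := ε'/3) (by positivity) (by positivity)
  filter_upwards [eventually_ge_atTop 1, hsm,
    hlogm.eventually (eventually_ge_atTop (x₀ + c)),
    hlogm.eventually hlow_ev] with m hm1 hsmall_m hLge hlow_m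
  set L := Real.log m with hLdef
  have hm0 : (0:ℝ) < m := by exact_mod_cast hm1
  have hF0 : 0 < Fbar L := hFpos L
  have hmexp : (m : ℝ) = Real.exp L := by rw [hLdef, Real.exp_log hm0]
  -- lower bound
  have hlower : (1 - ε') * Fbar L ≤ ∫ ω, g ω ^ m ∂μ := by
    have hsub : ∫ ω in {ω | L + c < ξ ω}, g ω ^ m ∂μ ≤ ∫ ω, g ω ^ m ∂μ :=
      setIntegral_le_integral (hInt m)
        (Filter.Eventually.of_forall fun ω => by positivity)
    have hconst : Real.exp (-Real.exp (-c)) * (μ {ω | L + c < ξ ω}).toReal ≤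
        ∫ ω in {ω | L + c < ξ ω}, g ω ^ m ∂μ := by
      apply setIntegral_ge_of_const_le_real (hms (L + c)) (measure_ne_top μ _)
      · intro ω hω
        exact aux_pt_lower m hm1 (le_of_lt hω)
      · exact (hInt m).integrableOn
    have hFeq : (μ {ω | L + c < ξ ω}).toReal = Fbar (L + c) := (hFbar _).symm
    have hexpc : 1 - ε'/2 ≤ Real.exp (-Real.exp (-c)) := by
      have h := Real.add_one_le_exp (-Real.exp (-c))
      linarith [hcε]
    calc (1 - ε') * Fbar L ≤ (1 - ε'/2) * ((1 - ε'/2) * Fbar L) := by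
          nlinarith [mul_pos (mul_pos hε'pos hε'pos) (hFpos L)]
      _ ≤ (1 - ε'/2) * Fbar (L + c) := by
          apply mul_le_mul_of_nonneg_left hlow_m (by linarith)
      _ ≤ Real.exp (-Real.exp (-c)) * Fbar (L + c) :=
          mul_le_mul_of_nonneg_right hexpc (le_of_lt (hFpos _))
      _ = Real.exp (-Real.exp (-c)) * (μ {ω | L + c < ξ ω}).toReal := by rw [hFeq]
      _ ≤ ∫ ω in {ω | L + c < ξ ω}, g ω ^ m ∂μ := hconst
      _ ≤ ∫ ω, g ω ^ m ∂μ := hsub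
  -- doubling lemma
  have hdbl : ∀ n : ℕ, x₀ ≤ L - n * c → Fbar (L - ((n:ℝ) + 1) * c) ≤ 2 ^ (n+1) * Fbar L := by
    intro n
    induction n with
    | zero =>
      intro h
      push_cast at h ⊢
      norm_num at h ⊢
      have h1 := hshift L h
      nlinarith [hF0, hε'le, hε'pos]
    | succ n ih =>
      intro h
      push_cast at h ⊢
      have hprev : x₀ ≤ L - n * c := by nlinarith [hc0, Nat.cast_nonneg (α := ℝ) n]
      have h1 : Fbar (L - ((n:ℝ) + 1 + 1) * c) ≤ (1 + ε'/3) * Fbar (L - ((n:ℝ) + 1) * c) := by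
        have h2 := hshift (L - ((n:ℝ)+1) * c) (by linarith)
        have he : L - ((n:ℝ)+1) * c - c = L - ((n:ℝ) + 1 + 1) * c := by ring
        rwa [he] at h2
      have h3 := ih hprev
      push_cast at h3
      calc Fbar (L - ((n:ℝ) + 1 + 1) * c) ≤ (1 + ε'/3) * Fbar (L - ((n:ℝ) + 1) * c) := h1
        _ ≤ 2 * (2 ^ (n+1) * Fbar L) := by
            have hb : (1 + ε'/3) ≤ 2 := by linarith
            have hfp := hFpos (L - ((n:ℝ)+1)*c)
            calc (1 + ε'/3) * Fbar (L - ((n:ℝ) + 1) * c)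
                ≤ 2 * Fbar (L - ((n:ℝ) + 1) * c) :=
                  mul_le_mul_of_nonneg_right hb (le_of_lt hfp)
              _ ≤ 2 * (2 ^ (n+1) * Fbar L) := by
                  apply mul_le_mul_of_nonneg_left h3 (by norm_num)
        _ = 2 ^ (n+1+1) * Fbar L := by ring
  -- slice lemma
  have hJ : ∀ n : ℕ, x₀ ≤ L - n * c →
      ∫ ω in {ω | L - ((n:ℝ) + 1) * c < ξ ω ∧ ξ ω ≤ L - c}, g ω ^ m ∂μ ≤
        (∑ k ∈ Finset.range n, 2 * r ^ (k+1)) * Fbar L := by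
    intro n
    induction n with
    | zero =>
      intro _
      have hempty : {ω | L - (((0:ℕ):ℝ) + 1) * c < ξ ω ∧ ξ ω ≤ L - c} = (∅ : Set Ω) := by
        ext ω
        simp only [Set.mem_setOf_eq, Set.mem_empty_iff_false, iff_false, not_and, not_le]
        intro h1
        norm_num at h1
        exact h1
      rw [hempty]
      simp
    | succ n ih =>
      intro h
      push_cast at h
      have hprev : x₀ ≤ L - n * c := by nlinarith [hc0, Nat.cast_nonneg (α := ℝ) n]
      have hB0 : (0:ℝ) ≤ L - ((n:ℝ) + 1) * c := le_trans hx₀0 h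
      have hun : {ω | L - ((((n:ℕ)+1:ℕ):ℝ) + 1) * c < ξ ω ∧ ξ ω ≤ L - c} =
          {ω | L - ((n:ℝ) + 1) * c < ξ ω ∧ ξ ω ≤ L - c} ∪
          {ω | L - ((n:ℝ) + 2) * c < ξ ω ∧ ξ ω ≤ L - ((n:ℝ) + 1) * c} := by
        ext ω
        simp only [Set.mem_setOf_eq, Set.mem_union]
        push_cast
        constructor
        · rintro ⟨h1, h2⟩
          rcases le_or_gt (ξ ω) (L - ((n:ℝ) + 1) * c) with h3 | h3
          · right; exact ⟨by linarith, h3⟩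
          · left; exact ⟨h3, h2⟩
        · rintro (⟨h1, h2⟩ | ⟨h1, h2⟩)
          · exact ⟨by linarith, h2⟩
          · refine ⟨by linarith, ?_⟩
            have : (0:ℝ) ≤ (n:ℝ) * c := by positivity
            linarith
      have hdisj : Disjoint {ω | L - ((n:ℝ) + 1) * c < ξ ω ∧ ξ ω ≤ L - c}
          {ω | L - ((n:ℝ) + 2) * c < ξ ω ∧ ξ ω ≤ L - ((n:ℝ) + 1) * c} := by
        rw [Set.disjoint_left]
        rintro ω ⟨h1, _⟩ ⟨_, h4⟩
        linarith
      have hslice : ∫ ω in {ω | L - ((n:ℝ) + 2) * c < ξ ω ∧ ξ ω ≤ L - ((n:ℝ) + 1) * c},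
          g ω ^ m ∂μ ≤ 2 * r ^ (n+1) * Fbar L := by
        have hCb : ∀ ω ∈ {ω | L - ((n:ℝ) + 2) * c < ξ ω ∧ ξ ω ≤ L - ((n:ℝ) + 1) * c},
            g ω ^ m ≤ Real.exp (-(Real.exp (((n:ℝ) + 1) * c)) / 2) := by
          intro ω hω
          have h1 := aux_pt_upper m hω.2 hB0
          have he : -(m:ℝ) / (2 * Real.exp (L - ((n:ℝ) + 1) * c)) =
              -(Real.exp (((n:ℝ) + 1) * c)) / 2 := by
            rw [hmexp, Real.exp_sub]
            field_simp
          rw [he] at h1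
          exact h1
        have h2 := hub m _ _ (hms2 (L - ((n:ℝ) + 2) * c) (L - ((n:ℝ) + 1) * c)) hCb
        have h3 : (μ {ω | L - ((n:ℝ) + 2) * c < ξ ω ∧ ξ ω ≤ L - ((n:ℝ) + 1) * c}).toReal ≤
            Fbar (L - ((n:ℝ) + 2) * c) := by
          rw [hFbar]
          exact hμle fun ω hω => hω.1
        have h4 : Fbar (L - ((n:ℝ) + 2) * c) ≤ 2 ^ (n+2) * Fbar L := by
          have h5 := hdbl (n+1) (by push_cast; linarith)
          push_cast at h5
          have he : L - ((n:ℝ) + 1 + 1) * c = L - ((n:ℝ) + 2) * c := by ring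
          rw [he] at h5
          convert h5 using 2
        have hcoef : Real.exp (-(Real.exp (((n:ℝ) + 1) * c)) / 2) * 2 ^ (n+2) ≤
            2 * r ^ (n+1) := by
          have hpow : Real.exp (((n:ℝ) + 1) * c) = (Real.exp c) ^ (n+1) := by
            rw [← Real.exp_nat_mul]
            congr 1
            push_cast
            ring
          have h6 : ((n:ℝ) + 1) * Real.exp c ≤ Real.exp (((n:ℝ) + 1) * c) := by
            rw [hpow, pow_succ]
            have h7 : ((n:ℝ) + 1) ≤ 2 ^ n := aux_cast_lt_two_pow n
            have h8 : (2:ℝ) ^ n ≤ (Real.exp c) ^ n := pow_le_pow_left₀ (by norm_num) hec2 n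
            nlinarith [Real.exp_pos c, pow_nonneg (le_of_lt (Real.exp_pos c)) n]
          have h9 : Real.exp (-(Real.exp (((n:ℝ) + 1) * c)) / 2) ≤
              Real.exp (-(((n:ℝ) + 1) * Real.exp c) / 2) := by
            rw [Real.exp_le_exp]
            linarith
          have h10 : Real.exp (-(((n:ℝ) + 1) * Real.exp c) / 2) =
              (Real.exp (-(Real.exp c / 2))) ^ (n+1) := by
            rw [← Real.exp_nat_mul]
            congr 1
            push_cast
            ring
          have h11 : Real.exp (-(Real.exp c / 2)) = r / 2 := by
            rw [hrdef]; ring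
          rw [h10, h11] at h9
          have h12 : (r/2) ^ (n+1) * 2 ^ (n+2) = 2 * r ^ (n+1) := by
            rw [div_pow]
            have : (2:ℝ) ^ (n+2) = 2 ^ (n+1) * 2 := by ring
            rw [this]
            field_simp
          calc Real.exp (-(Real.exp (((n:ℝ) + 1) * c)) / 2) * 2 ^ (n+2)
              ≤ (r/2) ^ (n+1) * 2 ^ (n+2) := by
                apply mul_le_mul_of_nonneg_right h9 (by positivity)
            _ = 2 * r ^ (n+1) := h12
        calc ∫ ω in {ω | L - ((n:ℝ) + 2) * c < ξ ω ∧ ξ ω ≤ L - ((n:ℝ) + 1) * c}, g ω ^ m ∂μ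
            ≤ Real.exp (-(Real.exp (((n:ℝ) + 1) * c)) / 2) *
              (μ {ω | L - ((n:ℝ) + 2) * c < ξ ω ∧ ξ ω ≤ L - ((n:ℝ) + 1) * c}).toReal := h2
          _ ≤ Real.exp (-(Real.exp (((n:ℝ) + 1) * c)) / 2) * (2 ^ (n+2) * Fbar L) := by
              apply mul_le_mul_of_nonneg_left (h3.trans h4) (le_of_lt (Real.exp_pos _))
          _ = (Real.exp (-(Real.exp (((n:ℝ) + 1) * c)) / 2) * 2 ^ (n+2)) * Fbar L := by ring
          _ ≤ (2 * r ^ (n+1)) * Fbar L :=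
              mul_le_mul_of_nonneg_right hcoef (le_of_lt hF0)
          _ = 2 * r ^ (n+1) * Fbar L := by ring
      rw [hun, setIntegral_union hdisj (hms2 _ _) ((hInt m).integrableOn)
        ((hInt m).integrableOn), Finset.sum_range_succ]
      have heq : (∑ k ∈ Finset.range n, 2 * r ^ (k+1) + 2 * r ^ (n+1)) * Fbar L
          = (∑ k ∈ Finset.range n, 2 * r ^ (k+1)) * Fbar L + 2 * r ^ (n+1) * Fbar L := by
        ring
      rw [heq]
      exact add_le_add (ih hprev) hslice
  -- upper bound decomposition
  have hupper : ∫ ω, g ω ^ m ∂μ ≤ (1 + ε') * Fbar L := by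
    have hx₀L : x₀ ≤ L - c := by linarith
    have hS1 : ∫ ω in {ω | L - c < ξ ω}, g ω ^ m ∂μ ≤ (1 + ε'/3) * Fbar L := by
      have h1 := hub m {ω | L - c < ξ ω} 1 (hms _)
        (fun ω _ => pow_le_one₀ (le_of_lt (hg_pos ω)) (hg_le1 ω))
      rw [one_mul] at h1
      have h2 : (μ {ω | L - c < ξ ω}).toReal = Fbar (L - c) := (hFbar _).symm
      rw [h2] at h1
      exact h1.trans (hshift L (by linarith))
    have hS2 : ∫ ω in {ω | ξ ω ≤ x₀}, g ω ^ m ∂μ ≤ (ε'/3) * Fbar L := by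
      have hCb : ∀ ω ∈ {ω | ξ ω ≤ x₀}, g ω ^ m ≤ Real.exp (-(m:ℝ) / (2 * Real.exp x₀)) :=
        fun ω hω => aux_pt_upper m hω hx₀0
      have h1 := hub m _ _ (measurableSet_le hξ measurable_const) hCb
      have h2 : Real.exp (-(m:ℝ) / (2 * Real.exp x₀)) *
          (μ {ω | ξ ω ≤ x₀}).toReal ≤ Real.exp (-(m:ℝ) / (2 * Real.exp x₀)) := by
        have := hμ1 {ω | ξ ω ≤ x₀}
        nlinarith [Real.exp_pos (-(m:ℝ) / (2 * Real.exp x₀)),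
          ENNReal.toReal_nonneg (a := μ {ω | ξ ω ≤ x₀})]
      have h3 : Real.exp (-(m:ℝ) / (2 * Real.exp x₀)) = Real.exp (-(m:ℝ) * (2 * Real.exp x₀)⁻¹) := by
        rw [div_eq_mul_inv]
      calc ∫ ω in {ω | ξ ω ≤ x₀}, g ω ^ m ∂μ
          ≤ Real.exp (-(m:ℝ) / (2 * Real.exp x₀)) * (μ {ω | ξ ω ≤ x₀}).toReal := h1
        _ ≤ Real.exp (-(m:ℝ) / (2 * Real.exp x₀)) := h2
        _ = Real.exp (-(m:ℝ) * (2 * Real.exp x₀)⁻¹) := h3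
        _ ≤ (ε'/3) * Fbar L := hsmall_m
    have hS3 : ∫ ω in {ω | x₀ < ξ ω ∧ ξ ω ≤ L - c}, g ω ^ m ∂μ ≤ (ε'/3) * Fbar L := by
      set N := ⌊(L - x₀)/c⌋₊ with hNdef
      have hN1 : x₀ ≤ L - (N:ℝ) * c := by
        have h1 := Nat.floor_le (div_nonneg (by linarith : (0:ℝ) ≤ L - x₀) hc0.le)
        have h2 := mul_le_mul_of_nonneg_right h1 hc0.le
        rw [div_mul_cancel₀ _ hc0.ne'] at h2
        linarith
      have hN2 : L - ((N:ℝ) + 1) * c < x₀ := by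
        have h1 := Nat.lt_floor_add_one ((L - x₀)/c)
        rw [div_lt_iff₀ hc0] at h1
        push_cast at h1
        linarith
      have hsub : {ω | x₀ < ξ ω ∧ ξ ω ≤ L - c} ⊆
          {ω | L - ((N:ℝ) + 1) * c < ξ ω ∧ ξ ω ≤ L - c} :=
        fun ω hω => ⟨lt_trans hN2 hω.1, hω.2⟩
      have hmono : ∫ ω in {ω | x₀ < ξ ω ∧ ξ ω ≤ L - c}, g ω ^ m ∂μ ≤
          ∫ ω in {ω | L - ((N:ℝ) + 1) * c < ξ ω ∧ ξ ω ≤ L - c}, g ω ^ m ∂μ := by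
        apply setIntegral_mono_set ((hInt m).integrableOn)
          (Filter.Eventually.of_forall fun ω => by positivity)
        exact Filter.Eventually.of_forall hsub
      have hJN := hJ N hN1
      have hsum : (∑ k ∈ Finset.range N, 2 * r ^ (k+1)) ≤ 4 * r := by
        have h1 : ∀ k ∈ Finset.range N, 2 * r ^ (k+1) ≤ 2 * r * (1/2) ^ k := by
          intro k _
          have h2 : r ^ k ≤ (1/2 : ℝ) ^ k := pow_le_pow_left₀ hr0 hr_half k
          have h3 : r ^ (k+1) = r ^ k * r := pow_succ r k
          nlinarith [pow_nonneg hr0 k, pow_nonneg (by norm_num : (0:ℝ) ≤ 1/2) k]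
        calc (∑ k ∈ Finset.range N, 2 * r ^ (k+1))
            ≤ ∑ k ∈ Finset.range N, 2 * r * (1/2) ^ k := Finset.sum_le_sum h1
          _ = 2 * r * ∑ k ∈ Finset.range N, (1/2 : ℝ) ^ k := by rw [Finset.mul_sum]
          _ ≤ 2 * r * 2 := by
              apply mul_le_mul_of_nonneg_left (sum_geometric_two_le N) (by positivity)
          _ = 4 * r := by ring
      calc ∫ ω in {ω | x₀ < ξ ω ∧ ξ ω ≤ L - c}, g ω ^ m ∂μ
          ≤ ∫ ω in {ω | L - ((N:ℝ) + 1) * c < ξ ω ∧ ξ ω ≤ L - c}, g ω ^ m ∂μ := hmono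
        _ ≤ (∑ k ∈ Finset.range N, 2 * r ^ (k+1)) * Fbar L := hJN
        _ ≤ (4 * r) * Fbar L := mul_le_mul_of_nonneg_right hsum (le_of_lt hF0)
        _ ≤ (ε'/3) * Fbar L := by
            apply mul_le_mul_of_nonneg_right _ (le_of_lt hF0)
            linarith
    have hdecomp : ∫ ω, g ω ^ m ∂μ = (∫ ω in {ω | L - c < ξ ω}, g ω ^ m ∂μ) +
        ((∫ ω in {ω | ξ ω ≤ x₀}, g ω ^ m ∂μ) +
          (∫ ω in {ω | x₀ < ξ ω ∧ ξ ω ≤ L - c}, g ω ^ m ∂μ)) := by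
      have h1 := integral_add_compl (hms (L - c)) (hInt m)
      have hcompl : {ω | L - c < ξ ω}ᶜ = {ω | ξ ω ≤ x₀} ∪ {ω | x₀ < ξ ω ∧ ξ ω ≤ L - c} := by
        ext ω
        simp only [Set.mem_compl_iff, Set.mem_setOf_eq, not_lt, Set.mem_union]
        constructor
        · intro h
          rcases le_or_gt (ξ ω) x₀ with h2 | h2
          · left; exact h2
          · right; exact ⟨h2, h⟩
        · rintro (h2 | ⟨_, h3⟩)
          · linarith
          · exact h3
      have hdisj2 : Disjoint {ω | ξ ω ≤ x₀} {ω | x₀ < ξ ω ∧ ξ ω ≤ L - c} := by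
        rw [Set.disjoint_left]
        rintro ω h1 ⟨h2, _⟩
        exact absurd h1 (not_le.2 h2)
      rw [← h1, hcompl, setIntegral_union hdisj2 (hms2 _ _)
        ((hInt m).integrableOn) ((hInt m).integrableOn)]
    rw [hdecomp]
    calc (∫ ω in {ω | L - c < ξ ω}, g ω ^ m ∂μ) +
        ((∫ ω in {ω | ξ ω ≤ x₀}, g ω ^ m ∂μ) +
          (∫ ω in {ω | x₀ < ξ ω ∧ ξ ω ≤ L - c}, g ω ^ m ∂μ))
        ≤ (1 + ε'/3) * Fbar L + ((ε'/3) * Fbar L + (ε'/3) * Fbar L) :=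
          add_le_add hS1 (add_le_add hS2 hS3)
      _ = (1 + ε') * Fbar L := by ring
  -- conclude
  rw [hIntRw m, Real.dist_eq, abs_lt]
  have h1 : (∫ ω, g ω ^ m ∂μ) / Fbar L ≤ 1 + ε' := by
    rw [div_le_iff₀ hF0]
    linarith
  have h2 : 1 - ε' ≤ (∫ ω, g ω ^ m ∂μ) / Fbar L := by
    rw [le_div_iff₀ hF0]
    linarith
  constructor <;> [skip; skip] <;> linarith
end

section
/- Under the setup where ξ = log((1-A)/A) has a long-tailed distribution F, for every fixed integer j ≥ 1, E[A^j (1-A)^m] = o(F̄(log m)) as m → ∞. -/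
open MeasureTheory Filter

private lemma aux_pt {a : ℝ} (ha : a ∈ Set.Ioo (0:ℝ) 1) {j m : ℕ} (hj : 1 ≤ j)
    (hm : 1 ≤ m) : a ^ j * (1 - a) ^ m ≤ 1 / m := by
  obtain ⟨ha0, ha1⟩ := ha
  have hm' : (0:ℝ) < m := by exact_mod_cast hm
  have h1 : a ^ j ≤ a := pow_le_of_le_one ha0.le ha1.le (by omega)
  have h2 : (1 - a) ^ m ≤ Real.exp (-((m:ℝ) * a)) := by
    calc (1 - a) ^ m ≤ Real.exp (-a) ^ m := by
          apply pow_le_pow_left₀ (by linarith)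
          linarith [Real.add_one_le_exp (-a)]
      _ = Real.exp (-((m:ℝ) * a)) := by
          rw [← Real.exp_nat_mul]; ring_nf
  have key : (m:ℝ) * a ≤ Real.exp ((m:ℝ) * a) := by
    linarith [Real.add_one_le_exp ((m:ℝ) * a)]
  have h4 : Real.exp ((m:ℝ)*a) * (Real.exp ((m:ℝ)*a))⁻¹ = 1 :=
    mul_inv_cancel₀ (ne_of_gt (Real.exp_pos _))
  have h3 : ((m:ℝ) * a) * Real.exp (-((m:ℝ) * a)) ≤ 1 := by
    rw [Real.exp_neg]
    nlinarith [key, h4, inv_pos.mpr (Real.exp_pos ((m:ℝ)*a))]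
  have h5 : a * Real.exp (-((m:ℝ) * a)) ≤ 1 / m := by
    have heq : a * Real.exp (-((m:ℝ) * a))
        = (((m:ℝ) * a) * Real.exp (-((m:ℝ) * a))) / m := by
      field_simp
    rw [heq]
    gcongr
  calc a ^ j * (1 - a) ^ m ≤ a * Real.exp (-((m:ℝ) * a)) := by
        apply mul_le_mul h1 h2 (pow_nonneg (by linarith) m) ha0.le
    _ ≤ 1 / m := h5

private lemma aux_lower (Fbar : ℝ → ℝ) (hpos : ∀ x, 0 < Fbar x) (hanti : Antitone Fbar)
    (h : Tendsto (fun x => Fbar (x - 1) / Fbar x) atTop (nhds 1)) :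
    ∃ x0 : ℝ, ∃ C : ℝ, 0 < C ∧ ∀ x ≥ x0, C * Real.exp (-(x/2)) ≤ Fbar x := by
  have h2 : ∀ᶠ x in atTop, Fbar (x - 1) / Fbar x < Real.exp (1/2) := by
    apply h.eventually_lt_const
    rw [show (1:ℝ) = Real.exp 0 by simp]
    exact Real.exp_lt_exp.mpr (by norm_num)
  obtain ⟨x0, hx0⟩ := eventually_atTop.mp h2
  have step : ∀ n : ℕ, Fbar x0 * Real.exp (-((n:ℝ)/2)) ≤ Fbar (x0 + n) := by
    intro n
    induction n with
    | zero => simp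
    | succ n ih =>
      have hx : x0 ≤ x0 + (n:ℝ) + 1 := by linarith [Nat.cast_nonneg (α := ℝ) n]
      have := hx0 (x0 + (n:ℝ) + 1) hx
      have hrw : x0 + (n:ℝ) + 1 - 1 = x0 + n := by ring
      rw [hrw] at this
      have hFp := hpos (x0 + (n:ℝ) + 1)
      have h6 : Fbar (x0 + n) ≤ Real.exp (1/2) * Fbar (x0 + (n:ℝ) + 1) := by
        rw [div_lt_iff₀ hFp] at this; linarith
    -- goal: Fbar x0 * exp (-((n+1)/2)) ≤ Fbar (x0 + (n+1))
      have hcast : ((n+1 : ℕ) : ℝ) = (n:ℝ) + 1 := by push_cast; ring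
      rw [hcast]
      have heq : Real.exp (-(((n:ℝ)+1)/2)) = Real.exp (-((n:ℝ)/2)) * Real.exp (-(1/2)) := by
        rw [← Real.exp_add]; ring_nf
      have haddeq : x0 + ((n:ℝ)+1) = x0 + (n:ℝ) + 1 := by ring
      rw [heq, haddeq]
      have hE : (0:ℝ) < Real.exp (-(1/2)) := Real.exp_pos _
      calc Fbar x0 * (Real.exp (-((n:ℝ)/2)) * Real.exp (-(1/2)))
          = (Fbar x0 * Real.exp (-((n:ℝ)/2))) * Real.exp (-(1/2)) := by ring
        _ ≤ Fbar (x0 + n) * Real.exp (-(1/2)) := by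
            apply mul_le_mul_of_nonneg_right ih hE.le
        _ ≤ Fbar (x0 + (n:ℝ) + 1) := by
            rw [Real.exp_neg]
            rw [mul_inv_le_iff₀ (Real.exp_pos _)]
            linarith [h6]
  refine ⟨x0, Fbar x0 * Real.exp ((x0 - 1)/2), mul_pos (hpos x0) (Real.exp_pos _), ?_⟩
  intro x hx
  set n : ℕ := ⌈x - x0⌉₊ with hn
  have hxn : x ≤ x0 + n := by
    have := Nat.le_ceil (x - x0); linarith
  have hn2 : (n:ℝ) ≤ x - x0 + 1 := by
    have := Nat.ceil_lt_add_one (by linarith : (0:ℝ) ≤ x - x0)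
    linarith
  have h7 : Fbar (x0 + n) ≤ Fbar x := hanti hxn
  have h8 : Real.exp (-((x - x0 + 1)/2)) ≤ Real.exp (-((n:ℝ)/2)) := by
    apply Real.exp_le_exp.mpr; linarith
  have h9 : Fbar x0 * Real.exp ((x0 - 1)/2) * Real.exp (-(x/2))
      = Fbar x0 * Real.exp (-((x - x0 + 1)/2)) := by
    rw [mul_assoc, ← Real.exp_add]; ring_nf
  rw [h9]
  calc Fbar x0 * Real.exp (-((x - x0 + 1)/2))
      ≤ Fbar x0 * Real.exp (-((n:ℝ)/2)) := by
        apply mul_le_mul_of_nonneg_left h8 (hpos x0).le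
    _ ≤ Fbar (x0 + n) := step n
    _ ≤ Fbar x := h7

/-- If `ξ = log((1-A)/A)` has a long-tailed distribution, then for every fixed
`j ≥ 1`, `E[A^j (1-A)^m] = o(F̄(log m))` as `m → ∞`. -/
theorem expectation_Aj_one_sub_A_pow_little_o {Ω : Type*} [MeasurableSpace Ω]
    (μ : Measure Ω) [IsProbabilityMeasure μ]
    (A : Ω → ℝ) (hAmeas : Measurable A) (hA01 : ∀ ω, A ω ∈ Set.Ioo (0 : ℝ) 1)
    (ξ : Ω → ℝ) (hξ : ∀ ω, ξ ω = Real.log ((1 - A ω) / A ω))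
    (Fbar : ℝ → ℝ) (hFbar : ∀ x, Fbar x = (μ {ω | x < ξ ω}).toReal)
    (hlong : IsLongTailedFun Fbar)
    (j : ℕ) (hj : 1 ≤ j) :
    Tendsto (fun m : ℕ =>
        (∫ ω, A ω ^ j * (1 - A ω) ^ m ∂μ) / Fbar (Real.log m))
      atTop (nhds 0) := by
  have hpos := hlong.1
  have hanti : Antitone Fbar := by
    intro x y hxy
    rw [hFbar x, hFbar y]
    exact ENNReal.toReal_mono (measure_ne_top μ _)
      (measure_mono (fun ω hω => lt_of_le_of_lt hxy hω))
  obtain ⟨x0, C, hC, hlow⟩ := aux_lower Fbar hpos hanti (hlong.2 1)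
  -- eventual bound
  have hev1 : ∀ᶠ m : ℕ in atTop, x0 ≤ Real.log m := by
    have : Tendsto (fun m : ℕ => Real.log m) atTop atTop :=
      Real.tendsto_log_atTop.comp tendsto_natCast_atTop_atTop
    exact this.eventually_ge_atTop x0
  have hint_nonneg : ∀ m : ℕ, 0 ≤ ∫ ω, A ω ^ j * (1 - A ω) ^ m ∂μ := by
    intro m
    apply integral_nonneg
    intro ω
    have h := hA01 ω
    exact mul_nonneg (pow_nonneg h.1.le j) (pow_nonneg (by linarith [h.2]) m)
  apply squeeze_zero' (Eventually.of_forall (fun m => by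
    exact div_nonneg (hint_nonneg m) (hpos _).le))
    (g := fun m : ℕ => (1/(m:ℝ)) / (C * Real.exp (-(Real.log m / 2))))
  · filter_upwards [hev1, eventually_ge_atTop 1] with m hm hm1
    have hIle : ∫ ω, A ω ^ j * (1 - A ω) ^ m ∂μ ≤ 1 / m := by
      have hb : ∀ ω, ‖A ω ^ j * (1 - A ω) ^ m‖ ≤ 1 / (m:ℝ) := by
        intro ω
        have h := hA01 ω
        rw [Real.norm_eq_abs, abs_of_nonneg
          (mul_nonneg (pow_nonneg h.1.le j) (pow_nonneg (by linarith [h.2]) m))]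
        exact aux_pt h hj hm1
      have := norm_integral_le_of_norm_le_const (μ := μ)
        (C := 1/(m:ℝ)) (Eventually.of_forall hb)
      simp only [measure_univ, ENNReal.toReal_one, mul_one, probReal_univ] at this
      exact le_trans (le_abs_self _) (by rwa [Real.norm_eq_abs] at this)
    exact div_le_div₀ (by positivity) hIle (mul_pos hC (Real.exp_pos _)) (hlow _ hm)
  · -- the majorant tends to 0
    have heq : ∀ᶠ m : ℕ in atTop,
        (1/(m:ℝ)) / (C * Real.exp (-(Real.log m / 2))) = C⁻¹ / Real.sqrt m := by
      filter_upwards [eventually_ge_atTop 1] with m hm1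
      have hm' : (0:ℝ) < m := by exact_mod_cast hm1
      have hs : Real.sqrt m = Real.exp (Real.log m / 2) := by
        rw [← Real.exp_log (Real.sqrt_pos.mpr hm'), Real.log_sqrt hm'.le]
      have hss : Real.sqrt m * Real.sqrt m = (m:ℝ) := Real.mul_self_sqrt hm'.le
      rw [Real.exp_neg, ← hs]
      have hsp : (0:ℝ) < Real.sqrt m := Real.sqrt_pos.mpr hm'
      field_simp
      nlinarith [hss]
    apply Tendsto.congr' (EventuallyEq.symm heq)
    have : Tendsto (fun m : ℕ => Real.sqrt m) atTop atTop := by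
      have h12 : Tendsto (fun x : ℝ => x ^ (1/2 : ℝ)) atTop atTop :=
        tendsto_rpow_atTop (by norm_num)
      simpa [Real.sqrt_eq_rpow, Function.comp_def] using h12.comp tendsto_natCast_atTop_atTop
    simpa [div_eq_mul_inv] using this.inv_tendsto_atTop.const_mul C⁻¹
end

section
/- If ξ has a long-tailed distribution F, then there exist constants γ < ∞ and ε > 0 such that for all m > 1 and all integers 1 ≤ j ≤ εm, E[A^j (1-A)^m] ≤ γ · (j^j m^m / (m+j)^{m+j}) · F̄(log m − log j), where A = 1/(1+e^ξ). -/
open MeasureTheory Filter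

lemma aux_anti (m j : ℕ) (hj : 1 ≤ j) (hm : 1 ≤ m) :
    AntitoneOn (fun x : ℝ => x ^ j * (1 - x) ^ m) (Set.Icc ((j : ℝ) / ((m : ℝ) + j)) 1) := by
  have hderiv : ∀ x : ℝ, HasDerivAt (fun x : ℝ => x ^ j * (1 - x) ^ m)
      ((j : ℝ) * x ^ (j - 1) * (1 - x) ^ m + x ^ j * ((m : ℝ) * (1 - x) ^ (m - 1) * (-1))) x :=
    fun x => (hasDerivAt_pow j x).mul (((hasDerivAt_id x).const_sub 1).pow m)
  have hmj : (0:ℝ) < (m : ℝ) + j := by positivity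
  apply antitoneOn_of_deriv_nonpos (convex_Icc _ _)
  · exact (Continuous.continuousOn (by continuity))
  · exact fun x _ => (hderiv x).differentiableAt.differentiableWithinAt
  · intro x hx
    rw [interior_Icc] at hx
    obtain ⟨hx1, hx2⟩ := hx
    rw [(hderiv x).deriv]
    have hx0 : 0 < x := lt_of_le_of_lt (by positivity) hx1
    have e1 : x ^ j = x ^ (j - 1) * x := by
      rw [← pow_succ]; congr 1; omega
    have e2 : (1 - x) ^ m = (1 - x) ^ (m - 1) * (1 - x) := by
      rw [← pow_succ]; congr 1; omega
    have hjx : (j : ℝ) * (1 - x) ≤ (m : ℝ) * x := by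
      rw [div_lt_iff₀ hmj] at hx1
      nlinarith
    have key : 0 ≤ ((m : ℝ) * x - (j : ℝ) * (1 - x)) * (x ^ (j - 1) * (1 - x) ^ (m - 1)) := by
      apply mul_nonneg (by linarith)
      exact mul_nonneg (pow_nonneg hx0.le _) (pow_nonneg (by linarith) _)
    rw [e1, e2]
    nlinarith [key]

lemma aux_mono (m j : ℕ) (hj : 1 ≤ j) (hm : 1 ≤ m) :
    MonotoneOn (fun x : ℝ => x ^ j * (1 - x) ^ m) (Set.Icc 0 ((j : ℝ) / ((m : ℝ) + j))) := by
  have hderiv : ∀ x : ℝ, HasDerivAt (fun x : ℝ => x ^ j * (1 - x) ^ m)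
      ((j : ℝ) * x ^ (j - 1) * (1 - x) ^ m + x ^ j * ((m : ℝ) * (1 - x) ^ (m - 1) * (-1))) x :=
    fun x => (hasDerivAt_pow j x).mul (((hasDerivAt_id x).const_sub 1).pow m)
  have hmj : (0:ℝ) < (m : ℝ) + j := by positivity
  apply monotoneOn_of_deriv_nonneg (convex_Icc _ _)
  · exact (Continuous.continuousOn (by continuity))
  · exact fun x _ => (hderiv x).differentiableAt.differentiableWithinAt
  · intro x hx
    rw [interior_Icc] at hx
    obtain ⟨hx1, hx2⟩ := hx
    rw [(hderiv x).deriv]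
    have hxlt1 : x < 1 := by
      have h1 : (j : ℝ) / ((m : ℝ) + j) ≤ 1 := by
        rw [div_le_one hmj]
        have : (0:ℝ) ≤ m := by positivity
        linarith
      linarith
    have e1 : x ^ j = x ^ (j - 1) * x := by
      rw [← pow_succ]; congr 1; omega
    have e2 : (1 - x) ^ m = (1 - x) ^ (m - 1) * (1 - x) := by
      rw [← pow_succ]; congr 1; omega
    have hjx : (m : ℝ) * x ≤ (j : ℝ) * (1 - x) := by
      rw [lt_div_iff₀ hmj] at hx2
      nlinarith
    have key : 0 ≤ ((j : ℝ) * (1 - x) - (m : ℝ) * x) * (x ^ (j - 1) * (1 - x) ^ (m - 1)) := by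
      apply mul_nonneg (by linarith)
      exact mul_nonneg (pow_nonneg hx1.le _) (pow_nonneg (by linarith) _)
    rw [e1, e2]
    nlinarith [key]

lemma aux_dec (m j : ℕ) (hj : 1 ≤ j) (hmj : 20 * j ≤ m) (s t : ℝ) (hst : s ≤ t)
    (het : Real.exp t = (m : ℝ) / (j : ℝ)) :
    Real.exp ((m : ℝ) * (s - 1)) / (1 + Real.exp (s - 1)) ^ (m + j)
      ≤ Real.exp (-(1/2)) * (Real.exp ((m : ℝ) * s) / (1 + Real.exp s) ^ (m + j)) := by
  have hjR : (1:ℝ) ≤ (j:ℝ) := by exact_mod_cast hj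
  have hmR : (20:ℝ) * j ≤ (m:ℝ) := by exact_mod_cast hmj
  have hm0 : (0:ℝ) < m := by linarith
  have hmjpos : (0:ℝ) < (m:ℝ) + j := by linarith
  set e1 : ℝ := Real.exp 1 with he1def
  have he1 : (2.7182818283 : ℝ) < e1 := Real.exp_one_gt_d9
  set a : ℝ := Real.exp (s - 1) with hadef
  have ha0 : 0 < a := Real.exp_pos _
  have hes : Real.exp s = a * e1 := by
    rw [hadef, he1def, ← Real.exp_add]; ring_nf
  have hjes : (j:ℝ) * (a * e1) ≤ (m:ℝ) := by
    rw [← hes]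
    have h1 : Real.exp s ≤ Real.exp t := Real.exp_le_exp.2 hst
    rw [het] at h1
    calc (j:ℝ) * Real.exp s ≤ (j:ℝ) * ((m:ℝ)/(j:ℝ)) :=
          mul_le_mul_of_nonneg_left h1 (by linarith)
      _ = (m:ℝ) := by field_simp
  have claim1 : (1 + a * e1) * ((m:ℝ) + j * e1) ≤ ((m:ℝ) + j) * e1 * (1 + a) := by
    nlinarith [mul_nonneg (by linarith : (0:ℝ) ≤ e1 - 1)
      (by linarith : (0:ℝ) ≤ (m:ℝ) - (j:ℝ) * (a * e1))]
  have claim2 : (1 + a * e1) ^ (m + j) * ((m:ℝ) + j * e1) ^ (m + j)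
      ≤ (((m:ℝ) + j) * e1) ^ (m + j) * (1 + a) ^ (m + j) := by
    rw [← mul_pow, ← mul_pow]
    apply pow_le_pow_left₀ (by positivity) claim1
  have he1j : e1 ^ j = Real.exp ((j:ℝ)) := by
    rw [he1def, ← Real.exp_nat_mul]; ring_nf
  have he1mj : e1 ^ (m + j) = Real.exp ((m:ℝ) + (j:ℝ)) := by
    rw [he1def, ← Real.exp_nat_mul]; push_cast; ring_nf
  have step3 : Real.exp ((j:ℝ) + 1/2) * ((m:ℝ) + j) ^ (m + j) ≤ ((m:ℝ) + (j:ℝ) * e1) ^ (m + j) := by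
    set x : ℝ := (j:ℝ) * (e1 - 1) / ((m:ℝ) + j) with hxdef
    have hx0 : 0 ≤ x := by
      apply div_nonneg (by nlinarith) (by linarith)
    have hxm : x * ((m:ℝ) + j) = (j:ℝ) * (e1 - 1) := by
      rw [hxdef]; field_simp
    have hxle : x ≤ (e1 - 1) / 21 := by
      rw [hxdef, div_le_div_iff₀ hmjpos (by norm_num)]
      nlinarith
    have key : Real.exp (x / (1 + x)) ≤ 1 + x := by
      have h1 : 1 - x / (1 + x) = 1 / (1 + x) := by field_simp; ring
      have h2 := Real.add_one_le_exp (-(x / (1 + x)))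
      rw [neg_add_eq_sub, h1] at h2
      rw [Real.exp_neg] at h2
      have h3 : 0 < Real.exp (x / (1 + x)) := Real.exp_pos _
      rw [one_div, inv_le_inv₀ (by linarith) h3] at h2
      exact h2
    have keypow : Real.exp (((m:ℝ) + (j:ℝ)) * (x / (1 + x))) ≤ (1 + x) ^ (m + j) := by
      have h4 : Real.exp (((m + j : ℕ):ℝ) * (x / (1 + x))) = Real.exp (x / (1+x)) ^ (m + j) :=
        Real.exp_nat_mul _ _
      push_cast at h4
      rw [h4]
      exact pow_le_pow_left₀ (Real.exp_pos _).le key _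
    have hexp_ge : (j:ℝ) + 1/2 ≤ ((m:ℝ) + (j:ℝ)) * (x / (1 + x)) := by
      rw [mul_div_assoc', le_div_iff₀ (by linarith : (0:ℝ) < 1 + x), mul_comm ((m:ℝ)+(j:ℝ)) x, hxm]
      nlinarith [mul_le_mul_of_nonneg_left hxle (by linarith : (0:ℝ) ≤ (j:ℝ) + 1/2),
        mul_nonneg (by linarith : (0:ℝ) ≤ (j:ℝ) - 1) (by linarith : (0:ℝ) ≤ e1 - 2.7182818283)]
    have hid : (m:ℝ) + (j:ℝ) * e1 = ((m:ℝ) + j) * (1 + x) := by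
      rw [hxdef]; field_simp; ring
    calc Real.exp ((j:ℝ) + 1/2) * ((m:ℝ) + j) ^ (m + j)
        ≤ Real.exp (((m:ℝ) + (j:ℝ)) * (x / (1 + x))) * ((m:ℝ) + j) ^ (m + j) := by
          apply mul_le_mul_of_nonneg_right (Real.exp_le_exp.2 hexp_ge) (by positivity)
      _ ≤ (1 + x) ^ (m + j) * ((m:ℝ) + j) ^ (m + j) := by
          apply mul_le_mul_of_nonneg_right keypow (by positivity)
      _ = (((m:ℝ) + j) * (1 + x)) ^ (m + j) := by rw [mul_pow]; ring
      _ = ((m:ℝ) + (j:ℝ) * e1) ^ (m + j) := by rw [hid]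
  have hQ : (0:ℝ) < ((m:ℝ) + (j:ℝ) * e1) ^ (m + j) := by
    have h1 : (0:ℝ) < (j:ℝ) * e1 := mul_pos (by linarith) (by linarith)
    exact pow_pos (by linarith) _
  have hE : Real.exp ((m:ℝ)*(s-1)) * e1^(m+j) = Real.exp ((m:ℝ)*s) * e1^j := by
    rw [he1j, he1mj, ← Real.exp_add, ← Real.exp_add]; ring_nf
  have step3' : e1^j * ((m:ℝ)+(j:ℝ))^(m+j) ≤ Real.exp (-(1/2)) * ((m:ℝ)+(j:ℝ)*e1)^(m+j) := by
    have h5 := mul_le_mul_of_nonneg_left step3 (Real.exp_nonneg (-(1/2)))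
    have h6 : Real.exp (-(1/2)) * Real.exp ((j:ℝ)+1/2) = Real.exp ((j:ℝ)) := by
      rw [← Real.exp_add]; ring_nf
    rw [he1j]
    calc Real.exp ((j:ℝ)) * ((m:ℝ)+(j:ℝ))^(m+j)
        = Real.exp (-(1/2)) * (Real.exp ((j:ℝ)+1/2) * ((m:ℝ)+(j:ℝ))^(m+j)) := by
          rw [← mul_assoc, h6]
      _ ≤ Real.exp (-(1/2)) * ((m:ℝ)+(j:ℝ)*e1)^(m+j) := h5
  have main : Real.exp ((m:ℝ)*(s-1)) * (1+Real.exp s)^(m+j) * (((m:ℝ)+(j:ℝ)*e1)^(m+j))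
      ≤ Real.exp (-(1/2)) * Real.exp ((m:ℝ)*s) * (1+a)^(m+j) * (((m:ℝ)+(j:ℝ)*e1)^(m+j)) := by
    calc Real.exp ((m:ℝ)*(s-1)) * (1+Real.exp s)^(m+j) * (((m:ℝ)+(j:ℝ)*e1)^(m+j))
        = Real.exp ((m:ℝ)*(s-1)) * ((1+a*e1)^(m+j) * ((m:ℝ)+(j:ℝ)*e1)^(m+j)) := by
          rw [hes]; ring
      _ ≤ Real.exp ((m:ℝ)*(s-1)) * ((((m:ℝ)+(j:ℝ))*e1)^(m+j) * (1+a)^(m+j)) := by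
          exact mul_le_mul_of_nonneg_left (by exact_mod_cast claim2) (Real.exp_nonneg _)
      _ = (Real.exp ((m:ℝ)*(s-1)) * e1^(m+j)) * (((m:ℝ)+(j:ℝ))^(m+j) * (1+a)^(m+j)) := by
          rw [mul_pow]; ring
      _ = (Real.exp ((m:ℝ)*s) * (1+a)^(m+j)) * (e1^j * ((m:ℝ)+(j:ℝ))^(m+j)) := by
          rw [hE]; ring
      _ ≤ (Real.exp ((m:ℝ)*s) * (1+a)^(m+j)) * (Real.exp (-(1/2)) * ((m:ℝ)+(j:ℝ)*e1)^(m+j)) := by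
          exact mul_le_mul_of_nonneg_left step3' (by positivity)
      _ = Real.exp (-(1/2)) * Real.exp ((m:ℝ)*s) * (1+a)^(m+j) * (((m:ℝ)+(j:ℝ)*e1)^(m+j)) := by
          ring
  have final := le_of_mul_le_mul_right main hQ
  rw [← mul_div_assoc, div_le_div_iff₀ (by positivity) (by positivity)]
  calc Real.exp ((m:ℝ)*(s-1)) * (1+Real.exp s)^(m+j)
      ≤ Real.exp (-(1/2)) * Real.exp ((m:ℝ)*s) * (1+a)^(m+j) := final
    _ = Real.exp (-(1/2)) * Real.exp ((m:ℝ)*s) * (1+Real.exp (s-1))^(m+j) := by rw [← hadef]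

set_option maxHeartbeats 1600000 in
/-- If `ξ` has a long-tailed distribution and `A = 1/(1+e^ξ)`, then there are
`γ < ∞` and `ε > 0` such that for all `m > 1` and `1 ≤ j ≤ εm`,
`E[A^j (1-A)^m] ≤ γ (j^j m^m / (m+j)^(m+j)) F̄(log m − log j)`. -/
theorem expectation_Aj_one_sub_A_pow_upper {Ω : Type*} [MeasurableSpace Ω]
    (μ : Measure Ω) [IsProbabilityMeasure μ]
    (ξ : Ω → ℝ) (hξ : Measurable ξ)
    (Fbar : ℝ → ℝ) (hFbar : ∀ x, Fbar x = (μ {ω | x < ξ ω}).toReal)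
    (hlong : IsLongTailedFun Fbar)
    (A : Ω → ℝ) (hA : ∀ ω, A ω = 1 / (1 + Real.exp (ξ ω))) :
    ∃ γ : ℝ, ∃ ε > (0 : ℝ), ∀ m j : ℕ, 1 < m → 1 ≤ j → (j : ℝ) ≤ ε * m →
      ∫ ω, A ω ^ j * (1 - A ω) ^ m ∂μ
        ≤ γ * ((j : ℝ) ^ j * (m : ℝ) ^ m / ((m : ℝ) + j) ^ (m + j))
            * Fbar (Real.log m - Real.log j) := by
  obtain ⟨hpos, hratio⟩ := hlong
  -- Fbar is antitone and at most 1
  have hanti_F : Antitone Fbar := by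
    intro a b hab
    rw [hFbar, hFbar]
    exact ENNReal.toReal_mono (measure_ne_top μ _)
      (measure_mono (fun ω h => lt_of_le_of_lt hab h))
  have hle1 : ∀ x, Fbar x ≤ 1 := by
    intro x
    rw [hFbar]
    simpa using ENNReal.toReal_mono (by simp)
      (prob_le_one (μ := μ) (s := {ω | x < ξ ω}))
  -- long-tail one-step ratio bound
  have hev : ∀ᶠ x in atTop, Fbar (x - 1) / Fbar x ≤ 5/4 :=
    (hratio 1).eventually (eventually_le_nhds (by norm_num))
  obtain ⟨x₀, hx₀⟩ := eventually_atTop.mp hev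
  set x₁ : ℝ := max x₀ 0 with hx₁def
  have hx₁0 : (0:ℝ) ≤ x₁ := le_max_right _ _
  have hstep : ∀ x : ℝ, x₁ ≤ x → Fbar (x - 1) ≤ 5/4 * Fbar x := by
    intro x hx
    have h := hx₀ x (le_trans (le_max_left _ _) hx)
    rw [div_le_iff₀ (hpos x)] at h
    linarith
  -- iterated upper bound
  have hiter : ∀ n : ℕ, ∀ x : ℝ, x₁ + n ≤ x → Fbar (x - n) ≤ (5/4)^n * Fbar x := by
    intro n
    induction n with
    | zero => intro x _; simp
    | succ k ih =>
      intro x hx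
      have hkn : (0:ℝ) ≤ (k:ℝ) := Nat.cast_nonneg k
      push_cast at hx
      have h1 : Fbar (x - 1) ≤ 5/4 * Fbar x := hstep x (by linarith)
      have h2 : Fbar ((x - 1) - k) ≤ (5/4)^k * Fbar (x - 1) := ih (x-1) (by linarith)
      have h3 : x - ((k:ℝ)+1) = (x - 1) - k := by ring
      calc Fbar (x - ((k:ℕ)+1:ℕ)) = Fbar ((x-1) - k) := by push_cast; rw [h3]
        _ ≤ (5/4)^k * Fbar (x-1) := h2
        _ ≤ (5/4)^k * (5/4 * Fbar x) := by
            apply mul_le_mul_of_nonneg_left h1 (by positivity)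
        _ = (5/4)^(k+1) * Fbar x := by rw [pow_succ]; ring
  -- iterated lower bound
  have hlower : ∀ n : ℕ, Fbar x₁ * (4/5)^n ≤ Fbar (x₁ + n) := by
    intro n
    induction n with
    | zero => simp
    | succ k ih =>
      have hkn : (0:ℝ) ≤ (k:ℝ) := Nat.cast_nonneg k
      have h1 : Fbar (x₁ + k) ≤ 5/4 * Fbar (x₁ + ((k:ℝ)+1)) := by
        have h := hstep (x₁ + ((k:ℝ)+1)) (by linarith)
        rw [show x₁ + ((k:ℝ)+1) - 1 = x₁ + k by ring] at h
        exact h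
      have h2 : (4/5 : ℝ) * Fbar (x₁ + k) ≤ Fbar (x₁ + ((k:ℝ)+1)) := by linarith
      calc Fbar x₁ * (4/5)^(k+1) = (4/5) * (Fbar x₁ * (4/5)^k) := by ring
        _ ≤ (4/5) * Fbar (x₁ + k) := by
            apply mul_le_mul_of_nonneg_left ih (by norm_num)
        _ ≤ Fbar (x₁ + ((k:ℕ)+1:ℕ)) := by push_cast; linarith
  have hlowerR : ∀ t : ℝ, 0 ≤ t → Fbar x₁ * (4/5)^(⌈t⌉₊) ≤ Fbar t := by
    intro t ht
    calc Fbar x₁ * (4/5)^(⌈t⌉₊) ≤ Fbar (x₁ + ⌈t⌉₊) := hlower _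
      _ ≤ Fbar t := hanti_F (by linarith [Nat.le_ceil t])
  -- the shift constant C
  set C : ℝ := max 1 ((5/4)^(⌈x₁⌉₊+1) / Fbar x₁) with hCdef
  have hC1 : (1:ℝ) ≤ C := le_max_left _ _
  have hlemB : ∀ t : ℝ, 0 ≤ t → ∀ k : ℕ, Fbar (t - ((k:ℝ)+1)) ≤ C * (5/4)^(k+1) * Fbar t := by
    intro t ht k
    by_cases hcase : x₁ + ((k:ℝ)+1) ≤ t
    · have h := hiter (k+1) t (by push_cast; linarith)
      push_cast at h
      calc Fbar (t - ((k:ℝ)+1)) ≤ (5/4)^(k+1) * Fbar t := h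
        _ ≤ C * (5/4)^(k+1) * Fbar t := by
            have h1 : (0:ℝ) ≤ (5/4:ℝ)^(k+1) * Fbar t :=
              mul_nonneg (by positivity) (hpos t).le
            nlinarith
    · push_neg at hcase
      set N : ℕ := ⌈x₁⌉₊ + (k+1) with hNdef
      have hceil : ⌈t⌉₊ ≤ N := by
        have h1 : t ≤ x₁ + ((k+1:ℕ):ℝ) := by push_cast; linarith
        calc ⌈t⌉₊ ≤ ⌈x₁ + ((k+1:ℕ):ℝ)⌉₊ := Nat.ceil_le_ceil h1
          _ = N := by rw [Nat.ceil_add_natCast hx₁0]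
      have hFt : Fbar x₁ * (4/5)^N ≤ Fbar t := by
        calc Fbar x₁ * (4/5)^N ≤ Fbar x₁ * (4/5)^(⌈t⌉₊) := by
              apply mul_le_mul_of_nonneg_left
                (pow_le_pow_of_le_one (by norm_num) (by norm_num) hceil) (hpos x₁).le
          _ ≤ Fbar t := hlowerR t ht
      have hgeom : ((5/4:ℝ))^N * (4/5)^N = 1 := by
        rw [← mul_pow]; norm_num
      have hCge : (5/4:ℝ)^(⌈x₁⌉₊+1) / Fbar x₁ ≤ C := le_max_right _ _
      have hNsum : (5/4:ℝ)^(⌈x₁⌉₊+1) * (5/4)^(k+1) = 5/4 * (5/4)^N := by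
        rw [← pow_add, show ⌈x₁⌉₊+1+(k+1) = N+1 by omega, pow_succ]
        ring
      have h2 : (1:ℝ) ≤ C * (5/4)^(k+1) * Fbar t := by
        have b1 : ((5/4:ℝ)^(⌈x₁⌉₊+1) / Fbar x₁) * (5/4)^(k+1) * (Fbar x₁ * (4/5)^N)
            = 5/4 * ((5/4)^N * (4/5)^N) := by
          have hFx : Fbar x₁ ≠ 0 := (hpos x₁).ne'
          calc ((5/4:ℝ)^(⌈x₁⌉₊+1) / Fbar x₁) * (5/4)^(k+1) * (Fbar x₁ * (4/5)^N)
              = ((5/4)^(⌈x₁⌉₊+1) * (5/4)^(k+1)) * (4/5)^N * (Fbar x₁ / Fbar x₁) := by ring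
            _ = 5/4 * ((5/4)^N * (4/5)^N) := by rw [div_self hFx, hNsum]; ring
        have b2 : ((5/4:ℝ)^(⌈x₁⌉₊+1) / Fbar x₁) * (5/4)^(k+1) * (Fbar x₁ * (4/5)^N)
            ≤ C * (5/4)^(k+1) * (Fbar x₁ * (4/5)^N) := by
          apply mul_le_mul_of_nonneg_right _ (mul_nonneg (hpos x₁).le (by positivity))
          apply mul_le_mul_of_nonneg_right hCge (by positivity)
        have b3 : C * (5/4:ℝ)^(k+1) * (Fbar x₁ * (4/5)^N) ≤ C * (5/4)^(k+1) * Fbar t := by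
          apply mul_le_mul_of_nonneg_left hFt (by positivity)
        rw [b1, hgeom] at b2
        linarith
      linarith [hle1 (t - ((k:ℝ)+1))]
  -- choose the constants
  refine ⟨1 + (15/2)*C + Real.exp 1 / Fbar x₁, 1/20, by norm_num, ?_⟩
  intro m j hm hj hje
  -- numeric facts
  have hjR1 : (1:ℝ) ≤ (j:ℝ) := by exact_mod_cast hj
  have hmj20 : 20 * j ≤ m := by
    have h : (20:ℝ) * (j:ℝ) ≤ (m:ℝ) := by linarith
    exact_mod_cast h
  have hm1 : 1 ≤ m := by omega
  have hjm : j ≤ m := by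
    calc j ≤ 20 * j := by omega
      _ ≤ m := hmj20
  have hj0R : (0:ℝ) < (j:ℝ) := by linarith
  have hm0R : (0:ℝ) < (m:ℝ) := by
    have : (20:ℝ) * (j:ℝ) ≤ (m:ℝ) := by exact_mod_cast hmj20
    linarith
  have hmjR : (0:ℝ) < (m:ℝ) + (j:ℝ) := by linarith
  set t : ℝ := Real.log (m:ℝ) - Real.log (j:ℝ) with htdef
  have het : Real.exp t = (m:ℝ)/(j:ℝ) := by
    rw [htdef, Real.exp_sub, Real.exp_log hm0R, Real.exp_log hj0R]
  have ht0 : 0 ≤ t := by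
    rw [htdef]
    have h := Real.log_le_log hj0R (show (j:ℝ) ≤ (m:ℝ) from by exact_mod_cast hjm)
    linarith
  set M : ℝ := (j:ℝ)^j * (m:ℝ)^m / ((m:ℝ) + (j:ℝ))^(m+j) with hMdef
  have hM0 : 0 < M := by rw [hMdef]; positivity
  set q : ℝ := Real.exp (-(1/2 : ℝ)) with hqdef
  have hq0 : 0 < q := Real.exp_pos _
  have hq23 : q ≤ 2/3 := by
    have h1 : Real.exp ((1:ℝ)/2)^2 = Real.exp 1 := by
      rw [← Real.exp_nat_mul]; norm_num
    have h2 : (3/2:ℝ) ≤ Real.exp (1/2) := by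
      nlinarith [Real.exp_one_gt_d9, Real.exp_pos ((1:ℝ)/2)]
    have h3 : (0:ℝ) < Real.exp ((1:ℝ)/2) := Real.exp_pos _
    rw [hqdef, Real.exp_neg]
    nlinarith [mul_inv_cancel₀ h3.ne', inv_nonneg.2 h3.le]
  set xstar : ℝ := (j:ℝ) / ((m:ℝ) + (j:ℝ)) with hxsdef
  have hxs0 : 0 < xstar := by rw [hxsdef]; positivity
  have hxs1 : xstar < 1 := by rw [hxsdef, div_lt_one hmjR]; linarith
  set p : ℝ → ℝ := fun x => x ^ j * (1 - x) ^ m with hpdef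
  set H : ℝ → ℝ := fun σ => Real.exp ((m:ℝ) * σ) / (1 + Real.exp σ) ^ (m + j) with hHdef
  have hanti : AntitoneOn p (Set.Icc xstar 1) := by
    rw [hpdef, hxsdef]; exact aux_anti m j hj hm1
  have hmono : MonotoneOn p (Set.Icc 0 xstar) := by
    rw [hpdef, hxsdef]; exact aux_mono m j hj hm1
  have hpx : ∀ σ : ℝ, p (1/(1+Real.exp σ)) = H σ := by
    intro σ
    have h0 : (0:ℝ) < 1 + Real.exp σ := by positivity
    have h1 : 1 - 1/(1+Real.exp σ) = Real.exp σ/(1+Real.exp σ) := by field_simp; ring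
    have h2 : Real.exp ((m:ℝ)*σ) = (Real.exp σ)^m := by rw [← Real.exp_nat_mul]
    simp only [hpdef, hHdef]
    rw [h1, h2]
    rw [div_pow, div_pow, one_pow, div_mul_div_comm, one_mul, ← pow_add, add_comm j m]
  have hxeq : xstar = 1/(1+Real.exp t) := by
    rw [hxsdef, het]
    rw [show (1:ℝ) + (m:ℝ)/(j:ℝ) = ((m:ℝ)+(j:ℝ))/(j:ℝ) from by field_simp; ring]
    rw [one_div, inv_div]
  have hHt : H t = M := by
    simp only [hHdef, hMdef]
    rw [show Real.exp ((m:ℝ)*t) = (Real.exp t)^m from by rw [← Real.exp_nat_mul], het,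
      show (1:ℝ) + (m:ℝ)/(j:ℝ) = ((m:ℝ)+(j:ℝ))/(j:ℝ) from by field_simp; ring, div_pow, div_pow]
    field_simp
    ring
  have hpxstar : p xstar = M := by rw [hxeq, hpx t, hHt]
  -- A takes values in (0,1)
  have hA01 : ∀ ω, 0 < A ω ∧ A ω < 1 := by
    intro ω
    rw [hA ω]
    have he : 0 < Real.exp (ξ ω) := Real.exp_pos _
    constructor
    · positivity
    · rw [div_lt_one (by positivity)]; linarith
  -- bound of p ∘ A on left regions
  have hfH : ∀ ω, ∀ τ : ℝ, ξ ω ≤ τ → τ ≤ t → p (A ω) ≤ H τ := by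
    intro ω τ h1 h2
    have he : 0 < Real.exp (ξ ω) := Real.exp_pos _
    have heτ : 0 < Real.exp τ := Real.exp_pos _
    have hy1 : 1/(1+Real.exp τ) ≤ 1 := by
      rw [div_le_one (by positivity)]; linarith
    have hyx : xstar ≤ 1/(1+Real.exp τ) := by
      rw [hxeq]
      apply one_div_le_one_div_of_le (by positivity)
      have := Real.exp_le_exp.2 h2
      linarith
    have hyA : 1/(1+Real.exp τ) ≤ A ω := by
      rw [hA ω]
      apply one_div_le_one_div_of_le (by positivity)
      have := Real.exp_le_exp.2 h1
      linarith
    have h3 : p (A ω) ≤ p (1/(1+Real.exp τ)) :=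
      hanti ⟨hyx, hy1⟩ ⟨le_trans hyx hyA, (hA01 ω).2.le⟩ hyA
    rw [hpx τ] at h3
    exact h3
  -- global max bound
  have hfM : ∀ ω, p (A ω) ≤ M := by
    intro ω
    obtain ⟨h0, h1⟩ := hA01 ω
    by_cases hc : A ω ≤ xstar
    · rw [← hpxstar]
      exact hmono ⟨h0.le, hc⟩ ⟨hxs0.le, le_refl _⟩ hc
    · rw [← hpxstar]
      exact hanti ⟨le_refl _, hxs1.le⟩ ⟨(not_le.1 hc).le, h1.le⟩ (not_le.1 hc).le
  -- one-step decay and iterated decay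
  have hdecl : ∀ s : ℝ, s ≤ t → H (s - 1) ≤ q * H s := by
    intro s hs
    simp only [hHdef, hqdef]
    exact aux_dec m j hj hmj20 s t hs het
  have hHk : ∀ k : ℕ, H (t - k) ≤ q^k * M := by
    intro k
    induction k with
    | zero => simp [hHt]
    | succ k ih =>
      have hkn : (0:ℝ) ≤ (k:ℝ) := Nat.cast_nonneg k
      calc H (t - ((k:ℕ)+1:ℕ)) = H ((t - k) - 1) := by push_cast; ring_nf
        _ ≤ q * H (t - k) := hdecl _ (by linarith)
        _ ≤ q * (q^k * M) := mul_le_mul_of_nonneg_left ih hq0.le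
        _ = q^(k+1) * M := by ring
  -- the integrand
  set f : Ω → ℝ := fun ω => A ω ^ j * (1 - A ω) ^ m with hfdef
  have hfp : ∀ ω, f ω = p (A ω) := fun ω => rfl
  have hAmeas : Measurable A := by
    have hAfun : A = fun ω => 1/(1+Real.exp (ξ ω)) := funext hA
    rw [hAfun]
    exact measurable_const.div (measurable_const.add (Real.measurable_exp.comp hξ))
  have hfmeas : Measurable f := (hAmeas.pow_const j).mul ((measurable_const.sub hAmeas).pow_const m)
  have hf01 : ∀ ω, 0 ≤ f ω ∧ f ω ≤ 1 := by
    intro ω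
    obtain ⟨h0, h1⟩ := hA01 ω
    constructor
    · exact mul_nonneg (pow_nonneg h0.le _) (pow_nonneg (by linarith) _)
    · exact mul_le_one₀ (pow_le_one₀ h0.le h1.le) (pow_nonneg (by linarith) _)
        (pow_le_one₀ (by linarith) (by linarith))
  have hfint : Integrable f μ := by
    apply Integrable.mono' (integrable_const (1:ℝ)) hfmeas.aestronglyMeasurable
    filter_upwards with ω
    rw [Real.norm_eq_abs, abs_of_nonneg (hf01 ω).1]
    exact (hf01 ω).2
  -- the splitting
  set K : ℕ := ⌈2*t⌉₊ with hKdef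
  have hK2t : 2*t ≤ (K:ℝ) := Nat.le_ceil _
  set Splus : Set Ω := {ω | t < ξ ω} with hSdef
  have hSmeas : MeasurableSet Splus := measurableSet_lt measurable_const hξ
  have hsplit : ∫ ω, f ω ∂μ = (∫ ω in Splus, f ω ∂μ) + ∫ ω in Splusᶜ, f ω ∂μ :=
    (integral_add_compl hSmeas hfint).symm
  have part1 : ∫ ω in Splus, f ω ∂μ ≤ M * Fbar t := by
    calc ∫ ω in Splus, f ω ∂μ ≤ ∫ _ω in Splus, M ∂μ :=
          setIntegral_mono_on hfint.integrableOn
            (integrableOn_const (measure_ne_top μ _)) hSmeas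
            (fun ω _ => by rw [hfp ω]; exact hfM ω)
      _ = (μ Splus).toReal * M := by rw [setIntegral_const, smul_eq_mul, measureReal_def]
      _ = Fbar t * M := by rw [hSdef, ← hFbar]
      _ = M * Fbar t := mul_comm _ _
  -- decompose the complement
  set B : ℕ → Set Ω := fun n => {ω | t - n < ξ ω ∧ ξ ω ≤ t} with hBdef
  set Elow : Set Ω := {ω | ξ ω ≤ t - (K:ℝ)} with hEdef
  have hBmeas : ∀ n, MeasurableSet (B n) := fun n =>
    (measurableSet_lt measurable_const hξ).inter (measurableSet_le hξ measurable_const)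
  have hEmeas : MeasurableSet Elow := measurableSet_le hξ measurable_const
  have hcompl : Splusᶜ = B K ∪ Elow := by
    ext ω
    simp only [hSdef, hBdef, hEdef, Set.mem_compl_iff, Set.mem_setOf_eq, Set.mem_union, not_lt]
    constructor
    · intro h
      by_cases h2 : ξ ω ≤ t - (K:ℝ)
      · exact Or.inr h2
      · exact Or.inl ⟨not_le.1 h2, h⟩
    · rintro (⟨h1, h2⟩ | h)
      · exact h2
      · have : (0:ℝ) ≤ (K:ℝ) := Nat.cast_nonneg K
        linarith
  have hdisj : Disjoint (B K) Elow := by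
    rw [Set.disjoint_left]
    rintro ω ⟨h1, h2⟩ h3
    simp only [hEdef, Set.mem_setOf_eq] at h3
    linarith
  have hsplit2 : ∫ ω in Splusᶜ, f ω ∂μ = (∫ ω in B K, f ω ∂μ) + ∫ ω in Elow, f ω ∂μ := by
    rw [hcompl]
    exact setIntegral_union hdisj hEmeas hfint.integrableOn hfint.integrableOn
  -- middle layers
  have claim_mid : ∀ n : ℕ, ∫ ω in B n, f ω ∂μ ≤
      ∑ k ∈ Finset.range n, q^k * M * Fbar (t - k - 1) := by
    intro n
    induction n with
    | zero =>
      have hB0 : B 0 = ∅ := by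
        ext ω
        simp only [hBdef, Set.mem_setOf_eq, Set.mem_empty_iff_false, iff_false, not_and, not_le,
          Nat.cast_zero, sub_zero]
        intro h1
        exact h1
      rw [hB0]
      simp
    | succ n ih =>
      have hkn : (0:ℝ) ≤ (n:ℝ) := Nat.cast_nonneg n
      set L : Set Ω := {ω | t - ((n:ℝ)+1) < ξ ω ∧ ξ ω ≤ t - (n:ℝ)} with hLdef
      have hLmeas : MeasurableSet L :=
        (measurableSet_lt measurable_const hξ).inter (measurableSet_le hξ measurable_const)
      have hBeq : B (n+1) = B n ∪ L := by
        ext ω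
        simp only [hBdef, hLdef, Set.mem_setOf_eq, Set.mem_union]
        push_cast
        constructor
        · rintro ⟨h1, h2⟩
          by_cases h3 : t - (n:ℝ) < ξ ω
          · exact Or.inl ⟨h3, h2⟩
          · exact Or.inr ⟨h1, not_lt.1 h3⟩
        · rintro (⟨h1, h2⟩ | ⟨h1, h2⟩)
          · exact ⟨by linarith, h2⟩
          · exact ⟨h1, by linarith⟩
      have hdisj2 : Disjoint (B n) L := by
        rw [Set.disjoint_left]
        rintro ω ⟨h1, h2⟩ h3
        simp only [hLdef, Set.mem_setOf_eq] at h3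
        obtain ⟨h4, h5⟩ := h3
        linarith
      have hLbound : ∫ ω in L, f ω ∂μ ≤ q^n * M * Fbar (t - n - 1) := by
        have hqM : (0:ℝ) ≤ q^n * M := mul_nonneg (pow_nonneg hq0.le _) hM0.le
        calc ∫ ω in L, f ω ∂μ ≤ ∫ _ω in L, q^n * M ∂μ := by
              apply setIntegral_mono_on hfint.integrableOn
                (integrableOn_const (measure_ne_top μ _)) hLmeas
              intro ω hω
              simp only [hLdef, Set.mem_setOf_eq] at hω
              calc f ω = p (A ω) := hfp ω
                _ ≤ H (t - n) := hfH ω (t - n) hω.2 (by linarith)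
                _ ≤ q^n * M := hHk n
          _ = (μ L).toReal * (q^n * M) := by rw [setIntegral_const, smul_eq_mul, measureReal_def]
          _ ≤ Fbar (t - n - 1) * (q^n * M) := by
              apply mul_le_mul_of_nonneg_right _ hqM
              rw [hFbar]
              apply ENNReal.toReal_mono (measure_ne_top μ _)
              apply measure_mono
              intro ω hω
              simp only [hLdef, Set.mem_setOf_eq] at hω ⊢
              linarith [hω.1]
          _ = q^n * M * Fbar (t - n - 1) := by ring
      rw [hBeq, setIntegral_union hdisj2 hLmeas hfint.integrableOn hfint.integrableOn,
        Finset.sum_range_succ]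
      exact add_le_add ih hLbound
  -- sum bound
  have hsum : ∑ k ∈ Finset.range K, q^k * M * Fbar (t - k - 1) ≤ (15/2)*C * M * Fbar t := by
    have hCMF : (0:ℝ) ≤ C * (5/4) * M * Fbar t := by
      apply mul_nonneg (mul_nonneg (mul_nonneg (by linarith) (by norm_num)) hM0.le) (hpos t).le
    have hterm : ∀ k ∈ Finset.range K,
        q^k * M * Fbar (t - k - 1) ≤ (C * (5/4) * M * Fbar t) * (5/6)^k := by
      intro k _
      have h1 : Fbar (t - k - 1) ≤ C * (5/4)^(k+1) * Fbar t := by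
        have h := hlemB t ht0 k
        rw [show t - ((k:ℝ)+1) = t - k - 1 by ring] at h
        exact h
      have h54q : (5/4:ℝ) * q ≤ 5/6 := by linarith
      calc q^k * M * Fbar (t - k - 1) ≤ q^k * M * (C * (5/4)^(k+1) * Fbar t) := by
            apply mul_le_mul_of_nonneg_left h1 (mul_nonneg (pow_nonneg hq0.le _) hM0.le)
        _ = (C * (5/4) * M * Fbar t) * ((5/4)*q)^k := by rw [mul_pow, pow_succ]; ring
        _ ≤ (C * (5/4) * M * Fbar t) * (5/6)^k := by
            apply mul_le_mul_of_nonneg_left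
              (pow_le_pow_left₀ (by positivity) h54q k) hCMF
    calc ∑ k ∈ Finset.range K, q^k * M * Fbar (t - k - 1)
        ≤ ∑ k ∈ Finset.range K, (C * (5/4) * M * Fbar t) * (5/6)^k := Finset.sum_le_sum hterm
      _ = (C * (5/4) * M * Fbar t) * ∑ k ∈ Finset.range K, (5/6:ℝ)^k := by
          rw [Finset.mul_sum]
      _ ≤ (C * (5/4) * M * Fbar t) * 6 := by
          apply mul_le_mul_of_nonneg_left _ hCMF
          rw [geom_sum_eq (by norm_num : (5/6:ℝ) ≠ 1)]
          have h2 : (0:ℝ) ≤ (5/6:ℝ)^K := by positivity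
          have h3 : ((5/6:ℝ)^K - 1)/((5/6:ℝ) - 1) = 6*(1 - (5/6:ℝ)^K) := by ring
          rw [h3]
          linarith
      _ = (15/2)*C * M * Fbar t := by ring
  -- low region
  have hlow : ∫ ω in Elow, f ω ∂μ ≤ (Real.exp 1 / Fbar x₁) * M * Fbar t := by
    have hqM : (0:ℝ) ≤ q^K * M := mul_nonneg (pow_nonneg hq0.le _) hM0.le
    have hKt : t - (K:ℝ) ≤ t := by
      have : (0:ℝ) ≤ (K:ℝ) := Nat.cast_nonneg K
      linarith
    have hmu1 : (μ Elow).toReal ≤ 1 := by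
      simpa using ENNReal.toReal_mono (by simp) (prob_le_one (μ := μ) (s := Elow))
    have key : q^K ≤ (Real.exp 1 / Fbar x₁) * Fbar t := by
      set n : ℕ := ⌈t⌉₊ with hndef
      have hn1 : (n:ℝ) < t + 1 := Nat.ceil_lt_add_one ht0
      have e1 : q^K = Real.exp ((K:ℝ) * (-(1/2))) := by
        rw [hqdef, Real.exp_nat_mul]
      have e2 : Real.exp ((K:ℝ) * (-(1/2))) ≤ Real.exp (-t) := Real.exp_le_exp.2 (by linarith)
      have e3 : Real.exp (-t) ≤ Real.exp 1 * Real.exp (-(n:ℝ)) := by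
        rw [← Real.exp_add]
        apply Real.exp_le_exp.2
        linarith
      have e4 : Real.exp (-(n:ℝ)) = (Real.exp (-1:ℝ))^n := by
        rw [← Real.exp_nat_mul]
        ring_nf
      have e5 : Real.exp (-1:ℝ) ≤ 4/5 := by
        rw [Real.exp_neg]
        nlinarith [Real.exp_one_gt_d9, mul_inv_cancel₀ (Real.exp_pos 1).ne',
          inv_nonneg.2 (Real.exp_pos 1).le]
      have e6 : (Real.exp (-1:ℝ))^n ≤ (4/5:ℝ)^n := pow_le_pow_left₀ (Real.exp_pos _).le e5 n
      have e7 : Fbar x₁ * (4/5)^n ≤ Fbar t := hlowerR t ht0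
      have e8 : (4/5:ℝ)^n ≤ Fbar t / Fbar x₁ := by
        rw [le_div_iff₀ (hpos x₁)]
        linarith [e7]
      calc q^K = Real.exp ((K:ℝ) * (-(1/2))) := e1
        _ ≤ Real.exp (-t) := e2
        _ ≤ Real.exp 1 * Real.exp (-(n:ℝ)) := e3
        _ = Real.exp 1 * (Real.exp (-1:ℝ))^n := by rw [e4]
        _ ≤ Real.exp 1 * (4/5:ℝ)^n := mul_le_mul_of_nonneg_left e6 (Real.exp_pos 1).le
        _ ≤ Real.exp 1 * (Fbar t / Fbar x₁) := mul_le_mul_of_nonneg_left e8 (Real.exp_pos 1).le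
        _ = (Real.exp 1 / Fbar x₁) * Fbar t := by ring
    calc ∫ ω in Elow, f ω ∂μ ≤ ∫ _ω in Elow, q^K * M ∂μ := by
          apply setIntegral_mono_on hfint.integrableOn
            (integrableOn_const (measure_ne_top μ _)) hEmeas
          intro ω hω
          simp only [hEdef, Set.mem_setOf_eq] at hω
          calc f ω = p (A ω) := hfp ω
            _ ≤ H (t - K) := hfH ω (t - K) hω hKt
            _ ≤ q^K * M := hHk K
      _ = (μ Elow).toReal * (q^K * M) := by rw [setIntegral_const, smul_eq_mul, measureReal_def]
      _ ≤ 1 * (q^K * M) := mul_le_mul_of_nonneg_right hmu1 hqM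
      _ = q^K * M := one_mul _
      _ ≤ ((Real.exp 1 / Fbar x₁) * Fbar t) * M := mul_le_mul_of_nonneg_right key hM0.le
      _ = (Real.exp 1 / Fbar x₁) * M * Fbar t := by ring
  -- final combination
  have hmid : ∫ ω in B K, f ω ∂μ ≤ (15/2)*C * M * Fbar t := le_trans (claim_mid K) hsum
  calc ∫ ω, f ω ∂μ = (∫ ω in Splus, f ω ∂μ) + ((∫ ω in B K, f ω ∂μ) + ∫ ω in Elow, f ω ∂μ) := by
        rw [hsplit, hsplit2]
    _ ≤ M * Fbar t + ((15/2)*C * M * Fbar t + (Real.exp 1 / Fbar x₁) * M * Fbar t) :=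
        add_le_add part1 (add_le_add hmid hlow)
    _ = (1 + 15/2*C + Real.exp 1 / Fbar x₁) * M * Fbar t := by ring
end

section
/- Let (Z_n) be the branching process with one immigrant per generation in random environment (A_n) i.i.d. with values in (0,1): Z_0 = 0 and conditionally on the environment, Z_{n+1} = Σ_{i=1}^{Z_n + 1} B_{n+1,i} where the B_{n+1,i} are i.i.d. geometric with parameter A_n. If ξ := log((1-A)/A) has a long-tailed distribution F, then P(Z_1 > m) ∼ F̄(log m) as m → ∞. -/
open MeasureTheory Filter

private lemma pow_lower {a t : ℝ} (n : ℕ) (ht : 0 < t) (h : a * (1 + t) ≤ 1) :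
    1 - (n : ℝ) / (1 + t) ≤ (1 - a) ^ n := by
  have h1t : (0:ℝ) < 1 + t := by linarith
  have hinv : 1 / (1 + t) ≤ 1 := by rw [div_le_one h1t]; linarith
  have hinv0 : 0 ≤ 1 / (1 + t) := by positivity
  have ha : a ≤ 1 / (1 + t) := by rw [le_div_iff₀ h1t]; linarith
  have h0 : 0 ≤ 1 - 1 / (1 + t) := by linarith
  have hstep : (1 - 1/(1+t)) ^ n ≤ (1 - a) ^ n := pow_le_pow_left₀ h0 (by linarith) n
  have hbern : 1 + (n:ℝ) * (-(1/(1+t))) ≤ (1 + (-(1/(1+t)))) ^ n :=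
    one_add_mul_le_pow (by linarith) n
  have heq : 1 - (n:ℝ)/(1+t) = 1 + (n:ℝ)*(-(1/(1+t))) := by ring
  have heq2 : (1 + (-(1/(1+t))))^n = (1 - 1/(1+t))^n := by ring_nf
  rw [heq]
  calc 1 + (n:ℝ)*(-(1/(1+t))) ≤ (1 + (-(1/(1+t))))^n := hbern
    _ = (1 - 1/(1+t))^n := heq2
    _ ≤ (1-a)^n := hstep

private lemma pow_upper {a s : ℝ} (n : ℕ) (ha1 : a ≤ 1) (hsa : s ≤ a) :
    (1 - a) ^ n ≤ Real.exp (-((n:ℝ) * s)) := by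
  have h1 : 1 - a ≤ Real.exp (-s) := by
    have := Real.add_one_le_exp (-s); linarith
  have h0 : (0:ℝ) ≤ 1 - a := by linarith
  calc (1-a)^n ≤ (Real.exp (-s))^n := pow_le_pow_left₀ h0 h1 n
    _ = Real.exp ((n:ℝ) * (-s)) := (Real.exp_nat_mul _ n).symm
    _ = Real.exp (-((n:ℝ)*s)) := by ring_nf

private lemma term_bound (k : ℕ) :
    Real.exp (-(Real.exp (k:ℝ)) / 2) * 2 ^ (k + 1) ≤ 32 * Real.exp (-(k:ℝ)) := by
  set y := (k:ℝ) with hy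
  have hy0 : 0 ≤ y := Nat.cast_nonneg k
  have hcube : Real.exp y = (Real.exp (y/3))^3 := by
    rw [← Real.exp_nat_mul]; norm_num; ring_nf
  have h3 : 1 + y/3 ≤ Real.exp (y/3) := by have := Real.add_one_le_exp (y/3); linarith
  have hey : 4*y - 4 ≤ Real.exp y := by
    rw [hcube]
    have h0 : (0:ℝ) ≤ 1 + y/3 := by linarith
    have hp : (1 + y/3)^3 ≤ (Real.exp (y/3))^3 := pow_le_pow_left₀ h0 h3 3
    nlinarith [sq_nonneg (y - 3), mul_nonneg (sq_nonneg (y-3)) hy0]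
  have h2e : (2:ℝ) ≤ Real.exp 1 := by have := Real.add_one_le_exp (1:ℝ); linarith
  have hpow : (2:ℝ)^(k+1) ≤ Real.exp (y + 1) := by
    calc (2:ℝ)^(k+1) ≤ (Real.exp 1)^(k+1) := pow_le_pow_left₀ (by norm_num) h2e _
      _ = Real.exp (((k+1 : ℕ) : ℝ) * 1) := (Real.exp_nat_mul _ _).symm
      _ = Real.exp (y+1) := by rw [hy]; push_cast; ring_nf
  have he3 : Real.exp 3 ≤ 32 := by
    have h := Real.exp_one_lt_d9
    have h1 : Real.exp 3 = (Real.exp 1)^3 := by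
      rw [← Real.exp_nat_mul]; norm_num
    rw [h1]
    have h2 : (Real.exp 1)^3 ≤ (2.7182818286:ℝ)^3 := pow_le_pow_left₀ (Real.exp_pos 1).le h.le 3
    nlinarith
  calc Real.exp (-(Real.exp y)/2) * 2^(k+1)
      ≤ Real.exp (-(Real.exp y)/2) * Real.exp (y+1) :=
        mul_le_mul_of_nonneg_left hpow (Real.exp_pos _).le
    _ = Real.exp (y + 1 - Real.exp y / 2) := by rw [← Real.exp_add]; ring_nf
    _ ≤ Real.exp (3 - y) := Real.exp_le_exp.mpr (by nlinarith)
    _ = Real.exp 3 * Real.exp (-y) := by rw [← Real.exp_add]; ring_nf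
    _ ≤ 32 * Real.exp (-y) := mul_le_mul_of_nonneg_right he3 (Real.exp_pos _).le

private lemma geo_sum (j : ℕ) : ∀ K : ℕ, j ≤ K →
    ∑ k ∈ Finset.Ico j K, Real.exp (-(k:ℝ)) ≤
      2 * Real.exp (-(j:ℝ)) - 2 * Real.exp (-(K:ℝ)) := by
  intro K hK
  induction K, hK using Nat.le_induction with
  | base => simp
  | succ K hK ih =>
    rw [Finset.sum_Ico_succ_top hK]
    have h2e : (2:ℝ) ≤ Real.exp 1 := by have := Real.add_one_le_exp (1:ℝ); linarith
    have hcast : (((K+1 : ℕ)):ℝ) = (K:ℝ) + 1 := by push_cast; ring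
    have hsplit : Real.exp (-((K:ℝ)+1)) = Real.exp (-(K:ℝ)) / Real.exp 1 := by
      rw [← Real.exp_sub]; ring_nf
    have hKpos := Real.exp_pos (-(K:ℝ))
    have h2 : 2 * Real.exp (-((K:ℝ)+1)) ≤ Real.exp (-(K:ℝ)) := by
      rw [hsplit, ← mul_div_assoc, div_le_iff₀ (Real.exp_pos 1)]
      nlinarith
    rw [hcast]
    linarith

private lemma tendsto_sq_mul_exp {c : ℝ} (hc : 0 < c) :
    Tendsto (fun m : ℕ => (m:ℝ)^2 * Real.exp (-(c * m))) atTop (nhds 0) := by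
  have h := Real.tendsto_pow_mul_exp_neg_atTop_nhds_zero 2
  have hcm : Tendsto (fun m : ℕ => c * (m:ℝ)) atTop atTop :=
    tendsto_natCast_atTop_atTop.const_mul_atTop hc
  have h2 := h.comp hcm
  have heq : (fun m : ℕ => (m:ℝ)^2 * Real.exp (-(c*m)))
      = fun m : ℕ => (1/c^2) * ((c*(m:ℝ))^2 * Real.exp (-(c*(m:ℝ)))) := by
    funext m; field_simp
  rw [heq]
  have h3 := h2.const_mul (1/c^2)
  simpa [Function.comp] using h3

private lemma half_pow_eq (m : ℕ) : (1/2:ℝ)^m = Real.exp (-(Real.log 2 * m)) := by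
  have : Real.exp (-(Real.log 2 * (m:ℝ))) = (Real.exp (-(Real.log 2)))^m := by
    rw [← Real.exp_nat_mul]; ring_nf
  rw [this, Real.exp_neg, Real.exp_log (by norm_num : (0:ℝ) < 2)]
  norm_num


set_option maxHeartbeats 2000000 in
/-- First generation of the branching process with one immigrant in random
environment: `Z₁` is geometric with random parameter `A₀`, so that
`P(Z₁ > m | A₀) = (1-A₀)^(m+1)`.  If `ξ = log((1-A₀)/A₀)` has a long-tailed
distribution `F`, then `P(Z₁ > m) ∼ F̄(log m)` as `m → ∞`. -/
theorem first_generation_tail {Ω : Type*} [MeasurableSpace Ω]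
    (μ : Measure Ω) [IsProbabilityMeasure μ]
    (A0 : Ω → ℝ) (hA0meas : Measurable A0) (hA01 : ∀ ω, A0 ω ∈ Set.Ioo (0 : ℝ) 1)
    (Z1 : Ω → ℕ) (hZ1meas : Measurable Z1)
    (hcond : ∀ m : ℕ, ∀ E : Set Ω, MeasurableSet[MeasurableSpace.comap A0 inferInstance] E →
      μ (E ∩ {ω | m < Z1 ω})
        = ∫⁻ ω in E, ENNReal.ofReal ((1 - A0 ω) ^ (m + 1)) ∂μ)
    (ξ : Ω → ℝ) (hξ : ∀ ω, ξ ω = Real.log ((1 - A0 ω) / A0 ω))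
    (Fbar : ℝ → ℝ) (hFbar : ∀ x, Fbar x = (μ {ω | x < ξ ω}).toReal)
    (hlong : IsLongTailedFun Fbar) :
    Tendsto (fun m : ℕ => (μ {ω | m < Z1 ω}).toReal / Fbar (Real.log m))
      atTop (nhds 1) := by
  classical
  obtain ⟨hFpos, hFratio⟩ := hlong
  have hξmeas : Measurable ξ := by
    have hh : ξ = fun ω => Real.log ((1 - A0 ω) / A0 ω) := funext hξ
    rw [hh]
    exact Real.measurable_log.comp ((measurable_const.sub hA0meas).div hA0meas)
  have hSmeas : ∀ x : ℝ, MeasurableSet {ω | x < ξ ω} :=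
    fun x => measurableSet_lt measurable_const hξmeas
  have hSiff : ∀ (x : ℝ) (ω : Ω), x < ξ ω ↔ Real.exp x * A0 ω < 1 - A0 ω := by
    intro x ω
    obtain ⟨hA0, hA1⟩ := hA01 ω
    rw [hξ ω, Real.lt_log_iff_exp_lt (div_pos (by linarith) hA0), lt_div_iff₀ hA0]
  have hFanti : ∀ x y : ℝ, x ≤ y → Fbar y ≤ Fbar x := by
    intro x y hxy
    rw [hFbar x, hFbar y]
    exact ENNReal.toReal_mono (measure_ne_top μ _)
      (measure_mono (fun ω hω => lt_of_le_of_lt hxy hω))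
  have hFle1 : ∀ x : ℝ, Fbar x ≤ 1 := by
    intro x; rw [hFbar x]
    have h := ENNReal.toReal_mono (ENNReal.one_ne_top) (prob_le_one (μ := μ) (s := {ω | x < ξ ω}))
    simpa using h
  -- integral representation
  have hgmeas : ∀ m : ℕ, Measurable fun ω => (1 - A0 ω) ^ (m+1) :=
    fun m => (measurable_const.sub hA0meas).pow_const (m+1)
  have hg01 : ∀ (m : ℕ) (ω : Ω), (1 - A0 ω)^(m+1) ∈ Set.Icc (0:ℝ) 1 := by
    intro m ω; obtain ⟨h0, h1⟩ := hA01 ω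
    exact ⟨pow_nonneg (by linarith) _, pow_le_one₀ (by linarith) (by linarith)⟩
  have hgint : ∀ m : ℕ, Integrable (fun ω => (1 - A0 ω)^(m+1)) μ := by
    intro m
    refine (integrable_const (1:ℝ)).mono' (hgmeas m).aestronglyMeasurable ?_
    filter_upwards with ω
    rw [Real.norm_eq_abs, abs_of_nonneg (hg01 m ω).1]
    exact (hg01 m ω).2
  have hInt : ∀ m : ℕ, (μ {ω | m < Z1 ω}).toReal = ∫ ω, (1 - A0 ω)^(m+1) ∂μ := by
    intro m
    have h0 := hcond m Set.univ MeasurableSet.univ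
    rw [Set.univ_inter, Measure.restrict_univ] at h0
    rw [h0, integral_eq_lintegral_of_nonneg_ae
      (Filter.Eventually.of_forall fun ω => (hg01 m ω).1) (hgmeas m).aestronglyMeasurable]
  -- halving
  obtain ⟨x₀, hx₀⟩ : ∃ x₀ : ℝ, ∀ x ≥ x₀, Fbar (x - 1) ≤ 2 * Fbar x := by
    have h := (hFratio 1).eventually (eventually_le_nhds (by norm_num : (1:ℝ) < 2))
    obtain ⟨x₀, hx₀⟩ := eventually_atTop.mp h
    exact ⟨x₀, fun x hx => by
      have := hx₀ x hx
      rw [div_le_iff₀ (hFpos x)] at this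
      linarith⟩
  have hiter : ∀ j : ℕ, ∀ x : ℝ, x₀ + j ≤ x → Fbar (x - j) ≤ 2^j * Fbar x := by
    intro j
    induction j with
    | zero => intro x _; simp
    | succ j ih =>
      intro x hx
      have hxc : ((j+1 : ℕ) : ℝ) = (j:ℝ) + 1 := by push_cast; ring
      rw [hxc] at hx
      have h1 : Fbar ((x-1) - j) ≤ 2^j * Fbar (x-1) := ih (x-1) (by linarith)
      have h2 : Fbar (x-1) ≤ 2 * Fbar x := hx₀ x (by linarith)
      have harg : x - ((j+1:ℕ):ℝ) = (x-1) - j := by push_cast; ring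
      rw [harg]
      calc Fbar ((x-1) - j) ≤ 2^j * Fbar (x-1) := h1
        _ ≤ 2^j * (2 * Fbar x) :=
          mul_le_mul_of_nonneg_left h2 (pow_nonneg (by norm_num) j)
        _ = 2^(j+1) * Fbar x := by ring
  -- exponential lower bound on Fbar
  set β := Fbar (x₀ + 1) * Real.exp x₀ with hβ
  have hβpos : 0 < β := mul_pos (hFpos _) (Real.exp_pos _)
  have hlow : ∀ x : ℝ, x₀ ≤ x → β * Real.exp (-x) ≤ Fbar x := by
    intro x hx
    set j := ⌊x - x₀⌋₊ with hj
    have hj1 : (j:ℝ) ≤ x - x₀ := Nat.floor_le (by linarith)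
    have hj2 : x - x₀ < j + 1 := Nat.lt_floor_add_one _
    have h1 : Fbar (x - j) ≤ 2^j * Fbar x := hiter j x (by linarith)
    have h2 : Fbar (x₀ + 1) ≤ Fbar (x - j) := hFanti _ _ (by linarith)
    have h2e : (2:ℝ) ≤ Real.exp 1 := by have := Real.add_one_le_exp (1:ℝ); linarith
    have h3 : (2:ℝ)^j ≤ Real.exp (x - x₀) := by
      calc (2:ℝ)^j ≤ (Real.exp 1)^j := pow_le_pow_left₀ (by norm_num) h2e j
        _ = Real.exp ((j:ℝ) * 1) := (Real.exp_nat_mul _ _).symm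
        _ ≤ Real.exp (x - x₀) := Real.exp_le_exp.mpr (by linarith)
    have h4 : Fbar (x₀+1) ≤ Real.exp (x - x₀) * Fbar x :=
      le_trans (le_trans h2 h1) (mul_le_mul_of_nonneg_right h3 (hFpos x).le)
    rw [hβ, mul_assoc, ← Real.exp_add, show x₀ + -x = -(x - x₀) by ring, Real.exp_neg,
      mul_inv_le_iff₀ (Real.exp_pos _)]
    linarith
  rw [Metric.tendsto_nhds]
  intro ε hε
  -- choose j₀
  obtain ⟨j₀, hj₀2, hj₀ε⟩ : ∃ j₀ : ℕ, 2 ≤ j₀ ∧ Real.exp (-(j₀:ℝ)) < ε / 256 := by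
    refine ⟨max 2 (⌈256/ε⌉₊ + 1), le_max_left _ _, ?_⟩
    set j := max 2 (⌈256/ε⌉₊ + 1) with hjdef
    have hj2 : 2 ≤ j := le_max_left _ _
    have hjpos : (0:ℝ) < (j:ℝ) := by positivity
    have h1 : Real.exp (-(j:ℝ)) ≤ 1/(j:ℝ) := by
      rw [Real.exp_neg, one_div]
      apply inv_anti₀ hjpos
      have := Real.add_one_le_exp ((j:ℝ)); linarith
    have h2 : 256/ε < (j:ℝ) := by
      have hcl : 256/ε ≤ (⌈256/ε⌉₊ : ℝ) := Nat.le_ceil _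
      have hle : (⌈256/ε⌉₊ + 1 : ℕ) ≤ j := le_max_right _ _
      have : ((⌈256/ε⌉₊ + 1 : ℕ) : ℝ) ≤ (j:ℝ) := Nat.cast_le.mpr hle
      push_cast at this
      linarith
    have h3 : 1/(j:ℝ) < ε/256 := by
      rw [div_lt_div_iff₀ hjpos (by norm_num : (0:ℝ) < 256)]
      rw [div_lt_iff₀ hε] at h2
      linarith
    linarith
  have hδ4 : Real.exp (-(j₀:ℝ)) < 1/4 := by
    have h1 : Real.exp (-(j₀:ℝ)) ≤ Real.exp (-(2:ℝ)) :=
      Real.exp_le_exp.mpr (by exact_mod_cast neg_le_neg (by exact_mod_cast hj₀2 : (2:ℝ) ≤ (j₀:ℝ)))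
    have h2 : Real.exp (-(2:ℝ)) < 1/4 := by
      have h2e : (2:ℝ) ≤ Real.exp 1 := by have := Real.add_one_le_exp (1:ℝ); linarith
      have he2 : Real.exp 2 = (Real.exp 1)^2 := by
        rw [← Real.exp_nat_mul]; norm_num
      have h4 : (4:ℝ) < Real.exp 2 := by rw [he2]; nlinarith [Real.exp_one_gt_d9]
      rw [Real.exp_neg, show (1/4:ℝ) = 4⁻¹ by norm_num]
      exact inv_strictAnti₀ (by norm_num) h4
    linarith
  have hLtop : Tendsto (fun m : ℕ => Real.log m) atTop atTop :=
    Real.tendsto_log_atTop.comp tendsto_natCast_atTop_atTop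
  have hup : ∀ᶠ m : ℕ in atTop,
      Fbar (Real.log m - (j₀:ℝ)) / Fbar (Real.log m) ≤ 1 + ε/4 := by
    have h := ((hFratio (j₀:ℝ)).comp hLtop).eventually
      (eventually_le_nhds (by linarith : (1:ℝ) < 1 + ε/4))
    simpa [Function.comp] using h
  have hlo : ∀ᶠ m : ℕ in atTop,
      1 - ε/4 ≤ Fbar (Real.log m + (j₀:ℝ)) / Fbar (Real.log m) := by
    have h0 : Tendsto (fun x => Fbar (x + (j₀:ℝ)) / Fbar x) atTop (nhds 1) := by
      have := hFratio (-(j₀:ℝ))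
      simpa [sub_neg_eq_add] using this
    have h := (h0.comp hLtop).eventually
      (eventually_ge_nhds (by linarith : 1 - ε/4 < (1:ℝ)))
    simpa [Function.comp] using h
  set c₁ : ℝ := Real.exp (-(x₀+1))/2 with hc₁
  have hc₁pos : 0 < c₁ := by positivity
  have hjk2 : ∀ᶠ m : ℕ in atTop, (m:ℝ)^2 * Real.exp (-(c₁ * m)) / β ≤ ε/8 := by
    have h : Tendsto (fun m : ℕ => (m:ℝ)^2 * Real.exp (-(c₁ * m)) / β) atTop (nhds 0) := by
      simpa using (tendsto_sq_mul_exp hc₁pos).div_const β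
    have h2 := h.eventually (eventually_le_nhds (by positivity : (0:ℝ) < ε/8))
    simpa using h2
  have hjk1 : ∀ᶠ m : ℕ in atTop, (m:ℝ)^2 * Real.exp (-(Real.log 2 * m)) / β ≤ ε/8 := by
    have h : Tendsto (fun m : ℕ => (m:ℝ)^2 * Real.exp (-(Real.log 2 * m)) / β) atTop (nhds 0) := by
      simpa using (tendsto_sq_mul_exp (Real.log_pos (by norm_num : (1:ℝ) < 2))).div_const β
    have h2 := h.eventually (eventually_le_nhds (by positivity : (0:ℝ) < ε/8))
    simpa using h2
  have hmbig : ∀ᶠ m : ℕ in atTop,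
      (1:ℝ) ≤ m ∧ x₀ + 1 ≤ Real.log m ∧ (j₀:ℝ) + 1 ≤ Real.log m := by
    have h1 : ∀ᶠ m : ℕ in atTop, (1:ℝ) ≤ m := by
      filter_upwards [eventually_ge_atTop 1] with m hm
      exact_mod_cast hm
    have h2 := hLtop.eventually_ge_atTop (x₀ + 1)
    have h3 := hLtop.eventually_ge_atTop ((j₀:ℝ) + 1)
    filter_upwards [h1, h2, h3] with m a b c using ⟨a, b, c⟩
  filter_upwards [hup, hlo, hjk1, hjk2, hmbig] with m hupm hlom hjk1m hjk2m hmbigm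
  obtain ⟨hm1, hmx₀, hmj₀⟩ := hmbigm
  -- setup for fixed m
  set L := Real.log (m:ℝ) with hL
  have hm0 : (0:ℝ) < m := by linarith
  have hexpL : Real.exp L = m := Real.exp_log hm0
  set K := ⌈L⌉₊ with hKdef
  have hLK : L ≤ (K:ℝ) := Nat.le_ceil L
  have hj₀K : j₀ ≤ K := by
    have h : (j₀:ℝ) ≤ (K:ℝ) := by linarith
    exact_mod_cast h
  have hKm : K ≤ m := by
    rw [hKdef, Nat.ceil_le]
    have := Real.log_le_sub_one_of_pos hm0
    rw [hL]
    linarith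
  have hFLpos := hFpos L
  have hFL_low : β / m ≤ Fbar L := by
    have h := hlow L (by linarith)
    rw [Real.exp_neg, hexpL] at h
    rw [div_eq_mul_inv]; exact h
  -- LOWER BOUND
  have hlower : (1 - 2*Real.exp (-(j₀:ℝ))) * Fbar (L + (j₀:ℝ))
      ≤ ∫ ω, (1 - A0 ω)^(m+1) ∂μ := by
    have hsub : ∀ ω ∈ {ω | L + (j₀:ℝ) < ξ ω},
        (1 - 2*Real.exp (-(j₀:ℝ))) ≤ (1 - A0 ω)^(m+1) := by
      intro ω hω
      have h := (hSiff (L + (j₀:ℝ)) ω).mp hω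
      rw [Real.exp_add, hexpL] at h
      set t := (m:ℝ) * Real.exp ((j₀:ℝ)) with htdef
      have ht : 0 < t := by positivity
      have hA0ω := (hA01 ω).1
      have hat : A0 ω * (1 + t) ≤ 1 := by nlinarith
      have hPL := pow_lower (m+1) ht hat
      have het : Real.exp (-(j₀:ℝ)) * t = m := by
        rw [htdef, Real.exp_neg]
        field_simp
      have hdiv : ((m+1:ℕ):ℝ)/(1+t) ≤ 2*Real.exp (-(j₀:ℝ)) := by
        rw [div_le_iff₀ (by linarith : (0:ℝ) < 1 + t)]
        have hepos := Real.exp_pos (-(j₀:ℝ))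
        push_cast
        nlinarith
      calc 1 - 2*Real.exp (-(j₀:ℝ)) ≤ 1 - ((m+1:ℕ):ℝ)/(1+t) := by linarith
        _ ≤ (1 - A0 ω)^(m+1) := hPL
    calc (1 - 2*Real.exp (-(j₀:ℝ))) * Fbar (L + (j₀:ℝ))
        = (1 - 2*Real.exp (-(j₀:ℝ))) * (μ {ω | L + (j₀:ℝ) < ξ ω}).toReal := by
          rw [hFbar]
      _ ≤ ∫ ω in {ω | L + (j₀:ℝ) < ξ ω}, (1 - A0 ω)^(m+1) ∂μ :=
          by have h := setIntegral_ge_of_const_le_real (hSmeas _) (measure_ne_top μ _) hsub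
                ((hgint m).integrableOn)
             exact h
      _ ≤ ∫ ω, (1 - A0 ω)^(m+1) ∂μ :=
          setIntegral_le_integral (hgint m)
            (Filter.Eventually.of_forall fun ω => (hg01 m ω).1)
  have hlower2 : (1 - 2*Real.exp (-(j₀:ℝ))) * (Fbar (L + (j₀:ℝ)) / Fbar L)
      ≤ (μ {ω | m < Z1 ω}).toReal / Fbar L := by
    rw [hInt m]
    have h := (div_le_div_iff_of_pos_right hFLpos).mpr hlower
    rwa [mul_div_assoc] at h
  have hlowbound : 1 - ε < (μ {ω | m < Z1 ω}).toReal / Fbar L := by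
    have h1 : (0:ℝ) ≤ 1 - 2*Real.exp (-(j₀:ℝ)) := by linarith
    have h2 : (1 - 2*Real.exp (-(j₀:ℝ))) * (1 - ε/4)
        ≤ (1 - 2*Real.exp (-(j₀:ℝ))) * (Fbar (L + (j₀:ℝ)) / Fbar L) :=
      mul_le_mul_of_nonneg_left hlom h1
    have h3 : 1 - ε < (1 - 2*Real.exp (-(j₀:ℝ))) * (1 - ε/4) := by
      nlinarith [hj₀ε, Real.exp_pos (-(j₀:ℝ))]
    linarith
  -- UPPER BOUND
  set E : ℕ → Set Ω := fun k => {ω | L - ((k:ℝ)+1) < ξ ω} ∩ {ω | ξ ω ≤ L - (k:ℝ)}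
    with hE
  have hEmeas : ∀ k, MeasurableSet (E k) := fun k =>
    (hSmeas _).inter (measurableSet_le hξmeas measurable_const)
  have hE0meas : MeasurableSet {ω | ξ ω ≤ 0} :=
    measurableSet_le hξmeas measurable_const
  set Φ : Ω → ℝ := fun ω =>
    Set.indicator {ω | L - (j₀:ℝ) < ξ ω} (fun _ => (1:ℝ)) ω
    + (∑ k ∈ Finset.Ico j₀ K,
        Set.indicator (E k) (fun _ => Real.exp (-(Real.exp (k:ℝ))/2)) ω)
    + Set.indicator {ω | ξ ω ≤ 0} (fun _ => (1/2:ℝ)^m) ω with hΦ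
  have hΦint : Integrable Φ μ := by
    rw [hΦ]
    exact (((integrable_const _).indicator (hSmeas _)).add
      (integrable_finset_sum _
        (fun k _ => (integrable_const _).indicator (hEmeas k)))).add
      ((integrable_const _).indicator hE0meas)
  have hgleΦ : (fun ω => (1 - A0 ω)^(m+1)) ≤ Φ := by
    rw [hΦ]
    intro ω
    dsimp only
    have hind1 : 0 ≤ Set.indicator {ω | L - (j₀:ℝ) < ξ ω} (fun _ => (1:ℝ)) ω :=
      Set.indicator_nonneg (fun _ _ => zero_le_one) ω
    have hind2 : 0 ≤ ∑ k ∈ Finset.Ico j₀ K,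
        Set.indicator (E k) (fun _ => Real.exp (-(Real.exp (k:ℝ))/2)) ω :=
      Finset.sum_nonneg fun k _ =>
        Set.indicator_nonneg (fun _ _ => (Real.exp_pos _).le) ω
    have hind3 : 0 ≤ Set.indicator {ω | ξ ω ≤ 0} (fun _ => (1/2:ℝ)^m) ω :=
      Set.indicator_nonneg (fun _ _ => by positivity) ω
    by_cases h1 : L - (j₀:ℝ) < ξ ω
    · have e1 : Set.indicator {ω | L - (j₀:ℝ) < ξ ω} (fun _ => (1:ℝ)) ω = 1 :=
        Set.indicator_of_mem (show ω ∈ {ω | L - (j₀:ℝ) < ξ ω} from h1) _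
      have := (hg01 m ω).2
      linarith
    · push_neg at h1
      by_cases h2 : 0 < ξ ω
      · set k := ⌊L - ξ ω⌋₊ with hk
        have hLξ0 : (j₀:ℝ) ≤ L - ξ ω := by linarith
        have hj₀nn : (0:ℝ) ≤ (j₀:ℝ) := Nat.cast_nonneg _
        have hk1 : (k:ℝ) ≤ L - ξ ω := Nat.floor_le (by linarith)
        have hk2 : L - ξ ω < k + 1 := Nat.lt_floor_add_one _
        have hkj : j₀ ≤ k := Nat.le_floor (by exact_mod_cast hLξ0)
        have hkK : k < K := by
          have h5 : (k:ℝ) < (K:ℝ) := by linarith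
          exact_mod_cast h5
        have hmem : ω ∈ E k := by
          rw [hE]
          exact ⟨by simp only [Set.mem_setOf_eq]; linarith,
                 by simp only [Set.mem_setOf_eq]; linarith⟩
        have hekm : Real.exp (k:ℝ) ≤ (m:ℝ) := by
          calc Real.exp (k:ℝ) ≤ Real.exp L := Real.exp_le_exp.mpr (by linarith)
            _ = m := hexpL
        have hxile : ξ ω ≤ L - (k:ℝ) := by linarith
        have hnot := not_lt.mpr hxile
        rw [hSiff (L - (k:ℝ)) ω] at hnot
        push_neg at hnot
        have hexpLk : Real.exp (L - (k:ℝ)) = (m:ℝ) * Real.exp (-(k:ℝ)) := by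
          rw [Real.exp_sub, hexpL, Real.exp_neg, div_eq_mul_inv]
        rw [hexpLk] at hnot
        set t := (m:ℝ) * Real.exp (-(k:ℝ)) with htdef
        have hekt : Real.exp (k:ℝ) * t = m := by
          rw [htdef, Real.exp_neg]
          field_simp
        have ht1 : 1 ≤ t := by
          have h6 : Real.exp (k:ℝ) * Real.exp (-(k:ℝ))
              ≤ (m:ℝ) * Real.exp (-(k:ℝ)) :=
            mul_le_mul_of_nonneg_right hekm (Real.exp_pos _).le
          rw [← Real.exp_add, add_neg_cancel, Real.exp_zero] at h6
          exact h6
        have hA0ω := hA01 ω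
        have h1t : (0:ℝ) < 1 + t := by linarith
        have hs : 1/(1+t) ≤ A0 ω := by
          rw [div_le_iff₀ h1t]
          nlinarith [hnot, hA0ω.1]
        have hgle := pow_upper (m+1) hA0ω.2.le hs
        have hfin : (1 - A0 ω)^(m+1) ≤ Real.exp (-(Real.exp (k:ℝ))/2) := by
          refine le_trans hgle (Real.exp_le_exp.mpr ?_)
          have hgoal : Real.exp (k:ℝ)/2 ≤ ((m+1:ℕ):ℝ) * (1/(1+t)) := by
            rw [mul_one_div, le_div_iff₀ h1t]
            push_cast
            nlinarith [hekt, hekm]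
          linarith
        have hterm : Real.exp (-(Real.exp (k:ℝ))/2)
            ≤ ∑ i ∈ Finset.Ico j₀ K,
                Set.indicator (E i) (fun _ => Real.exp (-(Real.exp (i:ℝ))/2)) ω := by
          have h7 := Finset.single_le_sum
            (f := fun i => Set.indicator (E i)
              (fun _ => Real.exp (-(Real.exp (i:ℝ))/2)) ω)
            (fun i _ => Set.indicator_nonneg (fun _ _ => (Real.exp_pos _).le) ω)
            (Finset.mem_Ico.mpr ⟨hkj, hkK⟩)
          have h8 : Set.indicator (E k)
              (fun _ => Real.exp (-(Real.exp (k:ℝ))/2)) ω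
              ≤ ∑ i ∈ Finset.Ico j₀ K,
                Set.indicator (E i) (fun _ => Real.exp (-(Real.exp (i:ℝ))/2)) ω := h7
          rwa [Set.indicator_of_mem hmem] at h8
        linarith
      · push_neg at h2
        have hnot := not_lt.mpr (le_of_lt (lt_of_le_of_lt h2 one_pos))
        have hnot0 : ¬ ((0:ℝ) < ξ ω) := not_lt.mpr h2
        rw [hSiff 0 ω] at hnot0
        push_neg at hnot0
        rw [Real.exp_zero, one_mul] at hnot0
        have e3 : Set.indicator {ω | ξ ω ≤ 0} (fun _ => (1/2:ℝ)^m) ω = (1/2:ℝ)^m :=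
          Set.indicator_of_mem (show ω ∈ {ω | ξ ω ≤ 0} from h2) _
        have hghalf : (1 - A0 ω)^(m+1) ≤ (1/2:ℝ)^m := by
          calc (1 - A0 ω)^(m+1) ≤ (1/2:ℝ)^(m+1) :=
              pow_le_pow_left₀ (by linarith [(hA01 ω).2] : (0:ℝ) ≤ 1 - A0 ω)
                (by linarith) (m+1)
            _ ≤ (1/2:ℝ)^m :=
              pow_le_pow_of_le_one (by norm_num) (by norm_num) (Nat.le_succ m)
        linarith
  have hintΦ : ∫ ω, Φ ω ∂μ = Fbar (L - (j₀:ℝ))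
      + (∑ k ∈ Finset.Ico j₀ K,
          Real.exp (-(Real.exp (k:ℝ))/2) * (μ (E k)).toReal)
      + (1/2:ℝ)^m * (μ {ω | ξ ω ≤ 0}).toReal := by
    have i1 : Integrable (Set.indicator {ω | L - (j₀:ℝ) < ξ ω} (fun _ => (1:ℝ))) μ :=
      (integrable_const _).indicator (hSmeas _)
    have i2 : Integrable (fun ω => ∑ k ∈ Finset.Ico j₀ K,
        Set.indicator (E k) (fun _ => Real.exp (-(Real.exp (k:ℝ))/2)) ω) μ :=
      integrable_finset_sum _ (fun k _ => (integrable_const _).indicator (hEmeas k))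
    have i3 : Integrable (Set.indicator {ω | ξ ω ≤ 0} (fun _ => (1/2:ℝ)^m)) μ :=
      (integrable_const _).indicator hE0meas
    have i12 : Integrable (fun ω => Set.indicator {ω | L - (j₀:ℝ) < ξ ω} (fun _ => (1:ℝ)) ω
        + ∑ k ∈ Finset.Ico j₀ K,
          Set.indicator (E k) (fun _ => Real.exp (-(Real.exp (k:ℝ))/2)) ω) μ := i1.add i2
    rw [hΦ]
    rw [integral_add i12 i3]
    rw [integral_add i1 i2]
    rw [integral_finset_sum _
        (fun k _ => (integrable_const _).indicator (hEmeas k))]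
    congr 1
    · congr 1
      · rw [integral_indicator (hSmeas _), setIntegral_const, smul_eq_mul,
          mul_one, hFbar, Measure.real_def]
      · refine Finset.sum_congr rfl (fun k _ => ?_)
        rw [integral_indicator (hEmeas k), setIntegral_const, smul_eq_mul,
          mul_comm, Measure.real_def]
    · rw [integral_indicator hE0meas, setIntegral_const, smul_eq_mul, mul_comm, Measure.real_def]
  have hEle : ∀ k : ℕ, (μ (E k)).toReal ≤ Fbar (L - ((k:ℝ)+1)) := by
    intro k
    rw [hFbar]
    exact ENNReal.toReal_mono (measure_ne_top μ _)
      (measure_mono Set.inter_subset_left)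
  have hsumdiv : (∑ k ∈ Finset.Ico j₀ K,
      Real.exp (-(Real.exp (k:ℝ))/2) * (μ (E k)).toReal) / Fbar L
      ≤ ε/4 + ε/8 := by
    have hperk : ∀ k ∈ Finset.Ico j₀ K,
        Real.exp (-(Real.exp (k:ℝ))/2) * (μ (E k)).toReal / Fbar L
          ≤ Real.exp (-(Real.exp (k:ℝ))/2) * 2^(k+1)
            + Real.exp (-(c₁*m)) * ((m:ℝ)/β) := by
      intro k _
      have hknn := (Real.exp_pos (-(Real.exp (k:ℝ))/2)).le
      have hEk := hEle k
      have hFk1 : Fbar (L - ((k:ℝ)+1)) ≤ 1 := hFle1 _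
      have hμnn : (0:ℝ) ≤ (μ (E k)).toReal := ENNReal.toReal_nonneg
      by_cases hcase : x₀ + ((k:ℝ)+1) ≤ L
      · have h7 : Fbar (L - ((k:ℝ)+1)) ≤ 2^(k+1) * Fbar L := by
          have h7' := hiter (k+1) L (by push_cast; linarith)
          push_cast at h7'
          exact h7'
        have h8 : Real.exp (-(Real.exp (k:ℝ))/2) * (μ (E k)).toReal / Fbar L
            ≤ Real.exp (-(Real.exp (k:ℝ))/2) * 2^(k+1) := by
          rw [div_le_iff₀ hFLpos]
          calc Real.exp (-(Real.exp (k:ℝ))/2) * (μ (E k)).toReal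
              ≤ Real.exp (-(Real.exp (k:ℝ))/2) * Fbar (L - ((k:ℝ)+1)) :=
                mul_le_mul_of_nonneg_left hEk hknn
            _ ≤ Real.exp (-(Real.exp (k:ℝ))/2) * (2^(k+1) * Fbar L) :=
                mul_le_mul_of_nonneg_left h7 hknn
            _ = Real.exp (-(Real.exp (k:ℝ))/2) * 2^(k+1) * Fbar L := by ring
        have hJnn : (0:ℝ) ≤ Real.exp (-(c₁*m)) * ((m:ℝ)/β) := by positivity
        linarith
      · push_neg at hcase
        have h9 : Real.exp (-(Real.exp (k:ℝ))/2) ≤ Real.exp (-(c₁*m)) := by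
          apply Real.exp_le_exp.mpr
          have h10 : Real.exp (L - (x₀+1)) ≤ Real.exp (k:ℝ) :=
            Real.exp_le_exp.mpr (by linarith)
          have h11 : Real.exp (L - (x₀+1)) = (m:ℝ) * Real.exp (-(x₀+1)) := by
            rw [Real.exp_sub, hexpL, Real.exp_neg, div_eq_mul_inv]
          rw [h11] at h10
          rw [hc₁]
          linarith
        have h12 : (μ (E k)).toReal / Fbar L ≤ (m:ℝ)/β := by
          have h13 : (μ (E k)).toReal ≤ 1 := le_trans hEk hFk1
          have hβm : (0:ℝ) < β/(m:ℝ) := by positivity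
          calc (μ (E k)).toReal / Fbar L ≤ 1 / (β/(m:ℝ)) :=
              div_le_div₀ zero_le_one h13 hβm hFL_low
            _ = (m:ℝ)/β := one_div_div _ _
        have hannn : (0:ℝ) ≤ Real.exp (-(Real.exp (k:ℝ))/2) * 2^(k+1) := by positivity
        calc Real.exp (-(Real.exp (k:ℝ))/2) * (μ (E k)).toReal / Fbar L
            = Real.exp (-(Real.exp (k:ℝ))/2) * ((μ (E k)).toReal / Fbar L) := by
              ring
          _ ≤ Real.exp (-(c₁*m)) * ((m:ℝ)/β) :=
              mul_le_mul h9 h12 (by positivity) (Real.exp_pos _).le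
          _ ≤ Real.exp (-(Real.exp (k:ℝ))/2) * 2^(k+1)
              + Real.exp (-(c₁*m)) * ((m:ℝ)/β) := by linarith
    rw [Finset.sum_div]
    have hsum2 := Finset.sum_le_sum hperk
    rw [Finset.sum_add_distrib] at hsum2
    have hsum3 : ∑ k ∈ Finset.Ico j₀ K, Real.exp (-(Real.exp (k:ℝ))/2) * 2^(k+1)
        ≤ 32 * (∑ k ∈ Finset.Ico j₀ K, Real.exp (-(k:ℝ))) := by
      rw [Finset.mul_sum]
      exact Finset.sum_le_sum (fun k _ => term_bound k)
    have hsum4 := geo_sum j₀ K hj₀K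
    have hsum5 : ∑ k ∈ Finset.Ico j₀ K, Real.exp (-(Real.exp (k:ℝ))/2) * 2^(k+1)
        ≤ 64 * Real.exp (-(j₀:ℝ)) := by
      have := Real.exp_pos (-(K:ℝ)); linarith
    have hcard : (∑ _k ∈ Finset.Ico j₀ K, Real.exp (-(c₁*m)) * ((m:ℝ)/β))
        ≤ (m:ℝ)^2 * Real.exp (-(c₁*m)) / β := by
      rw [Finset.sum_const, nsmul_eq_mul]
      have hcard2 : ((Finset.Ico j₀ K).card : ℝ) ≤ (m:ℝ) := by
        rw [Nat.card_Ico]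
        have h14 : K - j₀ ≤ m := le_trans (Nat.sub_le _ _) hKm
        exact_mod_cast h14
      have hJnn : (0:ℝ) ≤ Real.exp (-(c₁*m)) * ((m:ℝ)/β) := by positivity
      calc ((Finset.Ico j₀ K).card : ℝ) * (Real.exp (-(c₁*m)) * ((m:ℝ)/β))
          ≤ (m:ℝ) * (Real.exp (-(c₁*m)) * ((m:ℝ)/β)) :=
            mul_le_mul_of_nonneg_right hcard2 hJnn
        _ = (m:ℝ)^2 * Real.exp (-(c₁*m)) / β := by ring
    have h64 : 64 * Real.exp (-(j₀:ℝ)) ≤ ε/4 := by linarith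
    linarith [hsum2, hsum5, hcard, hjk2m]
  have hlast : (1/2:ℝ)^m * (μ {ω | ξ ω ≤ 0}).toReal / Fbar L ≤ ε/8 := by
    have h13 : (μ {ω | ξ ω ≤ 0}).toReal ≤ 1 := by
      have h := ENNReal.toReal_mono (ENNReal.one_ne_top)
        (prob_le_one (μ := μ) (s := {ω | ξ ω ≤ 0}))
      simpa using h
    have hβm : (0:ℝ) < β/(m:ℝ) := by positivity
    have h14 : (1/2:ℝ)^m * (μ {ω | ξ ω ≤ 0}).toReal / Fbar L
        ≤ (1/2:ℝ)^m * ((m:ℝ)/β) := by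
      calc (1/2:ℝ)^m * (μ {ω | ξ ω ≤ 0}).toReal / Fbar L
          = (1/2:ℝ)^m * ((μ {ω | ξ ω ≤ 0}).toReal / Fbar L) := by ring
        _ ≤ (1/2:ℝ)^m * (1/(β/(m:ℝ))) :=
            mul_le_mul_of_nonneg_left
              (div_le_div₀ zero_le_one h13 hβm hFL_low) (by positivity)
        _ = (1/2:ℝ)^m * ((m:ℝ)/β) := by rw [one_div_div]
    have h15 : (1/2:ℝ)^m * ((m:ℝ)/β)
        ≤ (m:ℝ)^2 * Real.exp (-(Real.log 2 * m)) / β := by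
      rw [half_pow_eq]
      have h16 : Real.exp (-(Real.log 2 * (m:ℝ))) * ((m:ℝ)/β)
          ≤ (m:ℝ)^2 * Real.exp (-(Real.log 2 * m)) / β := by
        rw [div_eq_mul_inv, div_eq_mul_inv]
        have h17 : Real.exp (-(Real.log 2 * (m:ℝ))) * (m:ℝ)
            ≤ (m:ℝ)^2 * Real.exp (-(Real.log 2 * (m:ℝ))) := by
          have hh : 0 ≤ Real.exp (-(Real.log 2 * (m:ℝ))) * (m:ℝ) * ((m:ℝ) - 1) :=
            mul_nonneg (mul_nonneg (Real.exp_pos _).le (by linarith)) (by linarith)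
          nlinarith [hh]
        have hβinv : (0:ℝ) ≤ β⁻¹ := by positivity
        calc Real.exp (-(Real.log 2 * (m:ℝ))) * ((m:ℝ) * β⁻¹)
            = (Real.exp (-(Real.log 2 * (m:ℝ))) * (m:ℝ)) * β⁻¹ := by ring
          _ ≤ ((m:ℝ)^2 * Real.exp (-(Real.log 2 * (m:ℝ)))) * β⁻¹ :=
              mul_le_mul_of_nonneg_right h17 hβinv
      exact h16
    linarith [hjk1m]
  have hupbound : (μ {ω | m < Z1 ω}).toReal / Fbar L ≤ 1 + 3*ε/4 := by
    rw [hInt m]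
    have hchain : ∫ ω, (1 - A0 ω)^(m+1) ∂μ ≤ Fbar (L - (j₀:ℝ))
        + (∑ k ∈ Finset.Ico j₀ K,
            Real.exp (-(Real.exp (k:ℝ))/2) * (μ (E k)).toReal)
        + (1/2:ℝ)^m * (μ {ω | ξ ω ≤ 0}).toReal :=
      le_of_le_of_eq (integral_mono (hgint m) hΦint hgleΦ) hintΦ
    have hdiv := (div_le_div_iff_of_pos_right hFLpos).mpr hchain
    rw [add_div, add_div] at hdiv
    linarith [hupm, hsumdiv, hlast]
  rw [Real.dist_eq, abs_sub_lt_iff]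
  exact ⟨by linarith, by linarith⟩
end

section
/- For the branching process in bounded random environment (A ≤ Â < 1 a.s.), there is δ > 0 (depending only on Â and ε > 0) such that for every l ≥ 1 and every generation j, P(Z_j ≤ l·a_{A_{j-1}}·e^{-ε} | Z_{j-1} = l, 𝒜) ≤ e^{-lδ}, where a_A = (1-A)/A. -/
open MeasureTheory ProbabilityTheory

/-- Quadratic upper bound for exp on `[-1,1]`. -/
lemma exp_le_quadratic {x : ℝ} (hx : |x| ≤ 1) :
    Real.exp x ≤ 1 + x + (3 / 4) * x ^ 2 := by
  have h := Real.exp_bound hx (n := 2) (by norm_num)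
  have hs : ∑ m ∈ Finset.range 2, x ^ m / m.factorial = 1 + x := by
    simp [Finset.sum_range_succ]
  rw [hs] at h
  have h2 : |x| ^ 2 = x ^ 2 := sq_abs x
  have h3 := (abs_sub_le_iff.1 h).1
  norm_num [Nat.factorial] at h3
  nlinarith [sq_abs x]

/-- mgf of a geometric random variable at `t ≤ 0`. -/
lemma geom_exp_moment {Ω : Type} [MeasurableSpace Ω] (μ : Measure Ω)
    [IsProbabilityMeasure μ] {A : ℝ} (hA0 : 0 < A) (hA1 : A < 1)
    {B : Ω → ℕ} (hB : Measurable B)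
    (hpmf : ∀ k : ℕ, μ {ω | B ω = k} = ENNReal.ofReal (A * (1 - A) ^ k))
    {t : ℝ} (ht : t ≤ 0) :
    Integrable (fun ω => Real.exp (t * (B ω : ℝ))) μ ∧
      ∫ ω, Real.exp (t * (B ω : ℝ)) ∂μ = A / (1 - (1 - A) * Real.exp t) := by
  set ν : Measure ℕ := μ.map B with hν
  have hνprob : IsProbabilityMeasure ν := Measure.isProbabilityMeasure_map hB.aemeasurable
  have hνs : ∀ k : ℕ, ν {k} = ENNReal.ofReal (A * (1 - A) ^ k) := by
    intro k
    rw [hν, Measure.map_apply hB (measurableSet_singleton k)]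
    exact hpmf k
  set f : ℕ → ℝ := fun n => Real.exp (t * n) with hf
  have hfm : Measurable f := measurable_from_top
  have hr0 : 0 ≤ (1 - A) * Real.exp t :=
    mul_nonneg (by linarith) (Real.exp_pos t).le
  have hr1 : (1 - A) * Real.exp t < 1 := by
    have h1 : Real.exp t ≤ 1 := Real.exp_le_one_iff.mpr ht
    nlinarith [Real.exp_pos t]
  have hfb : ∀ n : ℕ, 0 < f n ∧ f n ≤ 1 := by
    intro n
    refine ⟨Real.exp_pos _, Real.exp_le_one_iff.mpr ?_⟩
    exact mul_nonpos_of_nonpos_of_nonneg ht (Nat.cast_nonneg n)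
  -- integrability on ν
  have hint : Integrable f ν := by
    refine ⟨hfm.aestronglyMeasurable, ?_⟩
    rw [HasFiniteIntegral, lintegral_countable']
    calc ∑' n : ℕ, (‖f n‖₊ : ENNReal) * ν {n}
        ≤ ∑' n : ℕ, 1 * ν {n} := by
          refine ENNReal.tsum_le_tsum fun n => ?_
          gcongr
          have hn1 : ‖f n‖ ≤ 1 := by
            rw [Real.norm_of_nonneg (hfb n).1.le]; exact (hfb n).2
          exact_mod_cast hn1
      _ = ∑' n : ℕ, ν {n} := by simp
      _ ≤ ν Set.univ := by
          have hdj : Pairwise (Function.onFun Disjoint fun n : ℕ => ({n} : Set ℕ)) :=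
            fun i j hij => Set.disjoint_singleton.mpr hij
          rw [← measure_iUnion hdj fun n => measurableSet_singleton n]
          exact measure_mono (Set.subset_univ _)
      _ < ⊤ := by simp
  have hIμ : Integrable (fun ω => Real.exp (t * (B ω : ℝ))) μ := by
    have := (integrable_map_measure hfm.aestronglyMeasurable hB.aemeasurable).mp
      (by rw [← hν] at *; exact hint)
    exact this
  refine ⟨hIμ, ?_⟩
  have hmap : ∫ ω, Real.exp (t * (B ω : ℝ)) ∂μ = ∫ n, f n ∂ν := by
    rw [hν, integral_map hB.aemeasurable hfm.aestronglyMeasurable]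
  rw [hmap, integral_countable' hint]
  have hterm : ∀ n : ℕ, (ν {n}).toReal • f n = A * ((1 - A) * Real.exp t) ^ n := by
    intro n
    rw [hνs n, ENNReal.toReal_ofReal (mul_nonneg hA0.le (pow_nonneg (by linarith) _)), smul_eq_mul]
    rw [hf]
    simp only []
    rw [mul_comm t (n : ℝ), Real.exp_nat_mul, mul_pow, mul_assoc]
  simp_rw [measureReal_def, hterm]
  rw [tsum_mul_left, tsum_geometric_of_lt_one hr0 hr1, div_eq_mul_inv]

/-- Key analytic bound on the geometric mgf, uniform in `A`. -/
lemma geom_denom_bound {q K L A : ℝ} (hq0 : 0 < q) (hq1 : q < 1) (hK : 0 ≤ K)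
    (hL : L = (1 - q) / (1 + K)) (hA0 : 0 < A) (hA1 : A < 1)
    (hAK : A / (1 - A) ≤ K) :
    A / (1 - (1 - A) * Real.exp (-(L * (A / (1 - A))))) ≤ Real.exp (-(L * q)) := by
  have hK1 : (0 : ℝ) < 1 + K := by linarith
  have hL0 : 0 < L := by rw [hL]; exact div_pos (by linarith) hK1
  have hL1 : L ≤ 1 - q := by
    rw [hL]; exact div_le_self (by linarith) (by linarith)
  have h1A : (0 : ℝ) < 1 - A := by linarith
  set u : ℝ := L * (A / (1 - A)) with hu
  have hu0 : 0 ≤ u := mul_nonneg hL0.le (div_nonneg hA0.le h1A.le)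
  have hLK : L * K ≤ 1 := by
    rw [hL, div_mul_eq_mul_div, div_le_one hK1]; nlinarith
  have huK : u ≤ L * K := mul_le_mul_of_nonneg_left hAK hL0.le
  have hu1 : u ≤ 1 := le_trans huK hLK
  have hE : Real.exp (-u) ≤ 1 - u + (3 / 4) * u ^ 2 := by
    have := exp_le_quadratic (x := -u) (abs_le.mpr ⟨by linarith, by linarith⟩)
    nlinarith [this]
  have hu_eq : (1 - A) * u = L * A := by
    rw [hu]; field_simp
  have hD : A * (1 + L - (3 / 4) * (L * (L * K))) ≤ 1 - (1 - A) * Real.exp (-u) := by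
    have h1 : (1 - A) * Real.exp (-u) ≤ (1 - A) * (1 - u + (3 / 4) * u ^ 2) :=
      mul_le_mul_of_nonneg_left hE h1A.le
    have h2 : (1 - A) * u ^ 2 = L * A * u := by nlinarith [hu_eq]
    have h3 : L * A * u ≤ L * A * (L * K) :=
      mul_le_mul_of_nonneg_left huK (by positivity)
    nlinarith [h1, h2, h3, hu_eq]
  have hLq1 : |L * q| ≤ 1 := by
    rw [abs_of_nonneg (by positivity)]; nlinarith
  have hEq : Real.exp (L * q) ≤ 1 + L * q + (3 / 4) * (L * q) ^ 2 :=
    exp_le_quadratic hLq1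
  have hLsum : L * (1 + K) = 1 - q := by rw [hL]; field_simp
  have hq2 : L * (q ^ 2 + K) ≤ 1 - q := by
    have e0 : L * q ^ 2 ≤ L * 1 :=
      mul_le_mul_of_nonneg_left (by nlinarith) hL0.le
    have e0' : L * (q ^ 2 + K) = L * q ^ 2 + L * K := by ring
    linarith [hLsum]
  have hR : 1 + L * q + (3 / 4) * (L * q) ^ 2 ≤ 1 + L - (3 / 4) * (L * (L * K)) := by
    have e1 : L * (L * (q ^ 2 + K)) ≤ L * (1 - q) :=
      mul_le_mul_of_nonneg_left hq2 hL0.le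
    have e2 : 0 ≤ L * (1 - q) := mul_nonneg hL0.le (by linarith)
    have e3 : (3 / 4) * (L * q) ^ 2 + (3 / 4) * (L * (L * K)) =
        (3 / 4) * (L * (L * (q ^ 2 + K))) := by ring
    have e4 : L * (1 - q) = L - L * q := by ring
    linarith
  have hexp : A * Real.exp (L * q) ≤ 1 - (1 - A) * Real.exp (-u) := by
    refine le_trans ?_ hD
    exact mul_le_mul_of_nonneg_left (hEq.trans hR) hA0.le
  have hDpos : 0 < 1 - (1 - A) * Real.exp (-u) :=
    lt_of_lt_of_le (by positivity) hexp
  calc A / (1 - (1 - A) * Real.exp (-u))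
      ≤ A / (A * Real.exp (L * q)) := by
        apply div_le_div_of_nonneg_left hA0.le (by positivity) hexp
    _ = (Real.exp (L * q))⁻¹ := by
        rw [← div_div, div_self (ne_of_gt hA0), one_div]
    _ = Real.exp (-(L * q)) := (Real.exp_neg _).symm

/-- In bounded random environment (`A ≤ Â < 1`), one generation of the
branching process started from `l` particles (plus one immigrant) falls below
`l a_A e^{-ε}` with probability at most `e^{-lδ}`, where `a_A = (1-A)/A` and
`δ > 0` depends only on `Â` and `ε`.  Conditionally on the environment the new
generation is a sum of `l + 1` i.i.d. geometric(`A`) variables. -/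
theorem one_step_lower_deviation (Ahat ε : ℝ) (hAhat : Ahat < 1) (hε : 0 < ε) :
    ∃ δ > (0 : ℝ),
      ∀ (Ω : Type) (_ : MeasurableSpace Ω) (μ : Measure Ω),
        IsProbabilityMeasure μ →
        ∀ A : ℝ, A ∈ Set.Ioc (0 : ℝ) Ahat →
        ∀ l : ℕ, 1 ≤ l →
        ∀ B : Fin (l + 1) → Ω → ℕ, (∀ i, Measurable (B i)) →
          iIndepFun B μ →
          (∀ i, ∀ k : ℕ, μ {ω | B i ω = k} = ENNReal.ofReal (A * (1 - A) ^ k)) →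
          μ {ω | ((∑ i, B i ω : ℕ) : ℝ) ≤ l * ((1 - A) / A) * Real.exp (-ε)}
            ≤ ENNReal.ofReal (Real.exp (-(l : ℝ) * δ)) := by
  set q : ℝ := Real.exp (-(ε / 2)) with hqdef
  set K : ℝ := max (Ahat / (1 - Ahat)) 0 with hKdef
  set L : ℝ := (1 - q) / (1 + K) with hLdef
  have hq0 : 0 < q := Real.exp_pos _
  have hq1 : q < 1 := Real.exp_lt_one_iff.mpr (by linarith)
  have hK : 0 ≤ K := le_max_right _ _
  have hK1 : (0 : ℝ) < 1 + K := by linarith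
  have hL0 : 0 < L := div_pos (by linarith) hK1
  have hqε : Real.exp (-ε) < q := Real.exp_lt_exp.mpr (by linarith)
  refine ⟨L * (q - Real.exp (-ε)), mul_pos hL0 (by linarith), ?_⟩
  intro Ω mΩ μ hμ A hA l hl B hBm hBi hBp
  obtain ⟨hA0, hAle⟩ := hA
  have hA1 : A < 1 := lt_of_le_of_lt hAle hAhat
  have h1A : (0 : ℝ) < 1 - A := by linarith
  have hAhat0 : 0 < Ahat := lt_of_lt_of_le hA0 hAle
  have hAK : A / (1 - A) ≤ K := by
    refine le_trans ?_ (le_max_left _ _)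
    exact div_le_div₀ hAhat0.le hAle (by linarith) (by linarith)
  set u : ℝ := L * (A / (1 - A)) with hudef
  have hu0 : 0 ≤ u := mul_nonneg hL0.le (div_nonneg hA0.le h1A.le)
  set t : ℝ := -u with htdef
  have ht : t ≤ 0 := neg_nonpos.mpr hu0
  set X : Fin (l + 1) → Ω → ℝ := fun i ω => (B i ω : ℝ) with hXdef
  have hXm : ∀ i, Measurable (X i) := fun i => measurable_from_top.comp (hBm i)
  have hXi : iIndepFun X μ :=
    hBi.comp (fun _ => (Nat.cast : ℕ → ℝ)) fun _ => measurable_from_top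
  have geom := fun i =>
    geom_exp_moment μ hA0 hA1 (hBm i) (hBp i) ht
  have hIsum : Integrable (fun ω => Real.exp (t * (∑ i, X i) ω)) μ :=
    hXi.integrable_exp_mul_sum hXm fun i _ => (geom i).1
  set c : ℝ := (l : ℝ) * ((1 - A) / A) * Real.exp (-ε) with hcdef
  have chern := measure_le_le_exp_mul_mgf (μ := μ) (X := ∑ i, X i) c ht hIsum
  set M : ℝ := A / (1 - (1 - A) * Real.exp t) with hMdef
  have hmgf : mgf (∑ i, X i) μ t = M ^ (l + 1) := by
    rw [hXi.mgf_sum hXm]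
    have hone : ∀ i, mgf (X i) μ t = M := fun i => (geom i).2
    rw [Finset.prod_congr rfl fun i _ => hone i, Finset.prod_const, Finset.card_univ,
      Fintype.card_fin]
  have hMle : M ≤ Real.exp (-(L * q)) := by
    rw [hMdef, htdef, hudef]
    exact geom_denom_bound hq0 hq1 hK hLdef hA0 hA1 hAK
  have hexp_le_one : Real.exp t ≤ 1 := Real.exp_le_one_iff.mpr ht
  have hDpos : 0 < 1 - (1 - A) * Real.exp t := by
    nlinarith [Real.exp_pos t]
  have hM0 : 0 ≤ M := div_nonneg hA0.le hDpos.le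
  have hset : {ω | ((∑ i, B i ω : ℕ) : ℝ) ≤ c} = {ω | (∑ i, X i) ω ≤ c} := by
    ext ω
    rw [Set.mem_setOf_eq, Set.mem_setOf_eq, Finset.sum_apply]
    push_cast
    rfl
  have hA0' : A ≠ 0 := ne_of_gt hA0
  have h1A' : (1 : ℝ) - A ≠ 0 := ne_of_gt h1A
  have hcancel : A / (1 - A) * ((1 - A) / A) = 1 := by field_simp
  have htc : -t * c = L * (l : ℝ) * Real.exp (-ε) := by
    rw [htdef, neg_neg, hudef, hcdef]
    linear_combination L * (l : ℝ) * Real.exp (-ε) * hcancel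
  have hfinal : (μ {ω | (∑ i, X i) ω ≤ c}).toReal ≤
      Real.exp (-(l : ℝ) * (L * (q - Real.exp (-ε)))) := by
    calc (μ {ω | (∑ i, X i) ω ≤ c}).toReal
        ≤ Real.exp (-t * c) * mgf (∑ i, X i) μ t := chern
      _ ≤ Real.exp (-t * c) * Real.exp (-(L * q)) ^ (l + 1) := by
          rw [hmgf]
          exact mul_le_mul_of_nonneg_left (pow_le_pow_left₀ hM0 hMle _) (Real.exp_pos _).le
      _ = Real.exp (-t * c + ((l : ℝ) + 1) * (-(L * q))) := by
          rw [← Real.exp_nat_mul, ← Real.exp_add]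
          push_cast
          ring_nf
      _ ≤ Real.exp (-(l : ℝ) * (L * (q - Real.exp (-ε)))) := by
          apply Real.exp_le_exp.mpr
          rw [htc]
          nlinarith [mul_nonneg hL0.le hq0.le]
  rw [hset, ← ENNReal.ofReal_toReal (measure_ne_top μ {ω | (∑ i, X i) ω ≤ c})]
  exact ENNReal.ofReal_le_ofReal hfinal
end

section
/- For i.i.d. random variables ξ_1, ξ_2 with common subexponential distribution F, for every δ > 0 there exist K and ε > 0 such that for all sufficiently large x, P(ξ_1 + ξ_2 > x, ξ_2 ∈ (log K, x − log(1/ε)]) ≤ δ F̄(x). -/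
open MeasureTheory ProbabilityTheory Filter

private lemma tail_high {Ω : Type*} [MeasurableSpace Ω]
    (μ : Measure Ω) [IsProbabilityMeasure μ] (f : Ω → ℝ) (hf : Measurable f) :
    Tendsto (fun n : ℕ => (μ {ω | (n : ℝ) < f ω}).toReal) atTop (nhds 0) := by
  have hmeas : ∀ n : ℕ, MeasurableSet {ω | (n : ℝ) < f ω} :=
    fun n => measurableSet_lt measurable_const hf
  have hanti : Antitone fun n : ℕ => {ω | (n : ℝ) < f ω} := by
    intro n m hnm ω hω
    simp only [Set.mem_setOf_eq] at hω ⊢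
    exact lt_of_le_of_lt (by exact_mod_cast hnm) hω
  have hiint : (⋂ n : ℕ, {ω | (n : ℝ) < f ω}) = ∅ := by
    rw [Set.eq_empty_iff_forall_notMem]
    intro ω hω
    obtain ⟨n, hn⟩ := exists_nat_gt (f ω)
    exact absurd (Set.mem_iInter.1 hω n) (not_lt.2 hn.le)
  have h := tendsto_measure_iInter_atTop (μ := μ)
    (fun n => (hmeas n).nullMeasurableSet) hanti ⟨0, measure_ne_top μ _⟩
  rw [hiint, measure_empty] at h
  have h2 := (ENNReal.tendsto_toReal (by simp : (0 : ENNReal) ≠ ⊤)).comp h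
  simpa [Function.comp_def] using h2

private lemma tail_low {Ω : Type*} [MeasurableSpace Ω]
    (μ : Measure Ω) [IsProbabilityMeasure μ] (f : Ω → ℝ) (hf : Measurable f) :
    Tendsto (fun n : ℕ => (μ {ω | f ω ≤ -(n : ℝ)}).toReal) atTop (nhds 0) := by
  have hmeas : ∀ n : ℕ, MeasurableSet {ω | f ω ≤ -(n : ℝ)} :=
    fun n => measurableSet_le hf measurable_const
  have hanti : Antitone fun n : ℕ => {ω | f ω ≤ -(n : ℝ)} := by
    intro n m hnm ω hω
    simp only [Set.mem_setOf_eq] at hω ⊢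
    have : (n : ℝ) ≤ (m : ℝ) := by exact_mod_cast hnm
    linarith
  have hiint : (⋂ n : ℕ, {ω | f ω ≤ -(n : ℝ)}) = ∅ := by
    rw [Set.eq_empty_iff_forall_notMem]
    intro ω hω
    obtain ⟨n, hn⟩ := exists_nat_gt (-(f ω))
    have := Set.mem_iInter.1 hω n
    simp only [Set.mem_setOf_eq] at this
    linarith
  have h := tendsto_measure_iInter_atTop (μ := μ)
    (fun n => (hmeas n).nullMeasurableSet) hanti ⟨0, measure_ne_top μ _⟩
  rw [hiint, measure_empty] at h
  have h2 := (ENNReal.tendsto_toReal (by simp : (0 : ENNReal) ≠ ⊤)).comp h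
  simpa [Function.comp_def] using h2

set_option maxHeartbeats 1000000 in
/-- "No two big jumps" for a subexponential distribution: if `ξ₁, ξ₂` are
i.i.d. with common subexponential distribution `F`, then for every `δ > 0`
there are `K` and `ε > 0` such that for all large `x`,
`P(ξ₁ + ξ₂ > x, ξ₂ ∈ (log K, x − log(1/ε)]) ≤ δ F̄(x)`. -/
theorem subexponential_middle_range {Ω : Type*} [MeasurableSpace Ω]
    (μ : Measure Ω) [IsProbabilityMeasure μ]
    (ξ₁ ξ₂ : Ω → ℝ) (h₁ : Measurable ξ₁) (h₂ : Measurable ξ₂)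
    (hindep : IndepFun ξ₁ ξ₂ μ) (hid : IdentDistrib ξ₁ ξ₂ μ μ)
    (Fbar : ℝ → ℝ) (hFbar : ∀ x, Fbar x = (μ {ω | x < ξ₁ ω}).toReal)
    (hlong : IsLongTailedFun Fbar)
    (hsubexp : Tendsto (fun x => (μ {ω | x < ξ₁ ω + ξ₂ ω}).toReal / Fbar x)
      atTop (nhds 2))
    (δ : ℝ) (hδ : 0 < δ) :
    ∃ K : ℝ, ∃ ε > (0 : ℝ), ∃ x₀ : ℝ, ∀ x ≥ x₀,
      (μ {ω | x < ξ₁ ω + ξ₂ ω ∧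
          ξ₂ ω ∈ Set.Ioc (Real.log K) (x - Real.log (1 / ε))}).toReal
        ≤ δ * Fbar x := by
  have hFpos := hlong.1
  set δ' := min δ 1 with hδ'def
  have hδ'0 : 0 < δ' := lt_min hδ one_pos
  have hδ'δ : δ' ≤ δ := min_le_left _ _
  have hδ'1 : δ' ≤ 1 := min_le_right _ _
  set η := δ' / 8 with hηdef
  have hη0 : 0 < η := by positivity
  have hη8 : η ≤ 1 / 8 := by rw [hηdef]; linarith
  -- complement identity
  have key : ∀ c : ℝ, (μ {ω | c < ξ₁ ω}).toReal + (μ {ω | ξ₁ ω ≤ c}).toReal = 1 := by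
    intro c
    have hm : MeasurableSet {ω | c < ξ₁ ω} := measurableSet_lt measurable_const h₁
    have h := measure_add_measure_compl (μ := μ) hm
    have hc : {ω | c < ξ₁ ω}ᶜ = {ω | ξ₁ ω ≤ c} := by ext ω; simp [not_lt]
    rw [hc] at h
    have := ENNReal.toReal_add (measure_ne_top μ {ω | c < ξ₁ ω})
      (measure_ne_top μ {ω | ξ₁ ω ≤ c})
    rw [← this, h]
    simp
  -- choose b
  obtain ⟨nb, hnb⟩ := ((tail_low μ ξ₁ h₁).eventually_lt_const hη0).exists
  set b : ℝ := -(nb : ℝ) with hbdef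
  have hFb : 1 - η < Fbar b := by
    rw [hFbar]
    have := key b
    linarith
  -- choose a ≥ b
  obtain ⟨na, hna⟩ := (((tail_high μ ξ₁ h₁).eventually_lt_const hη0).and
    (tendsto_natCast_atTop_atTop.eventually_ge_atTop b)).exists
  set a : ℝ := (na : ℝ) with hadef
  have hFa : Fbar a < η := by rw [hFbar]; exact hna.1
  have hab : b ≤ a := hna.2
  have hFa0 : 0 < Fbar a := hFpos a
  have hFble : Fbar b ≤ 1 := by
    rw [hFbar]
    have := key b
    have : (μ {ω | ξ₁ ω ≤ b}).toReal ≥ 0 := ENNReal.toReal_nonneg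
    linarith [key b]
  -- eventual conditions
  have h1 := hsubexp.eventually_lt_const (by linarith : (2 : ℝ) < 2 + η)
  have h2 := (hlong.2 b).eventually_const_lt (by linarith : 1 - η < 1)
  have h3 := eventually_ge_atTop (a + b)
  obtain ⟨x₀, hx₀⟩ := Filter.eventually_atTop.1 ((h1.and h2).and h3)
  refine ⟨Real.exp a, Real.exp (-b), Real.exp_pos _, x₀, fun x hx => ?_⟩
  obtain ⟨⟨hx1, hx2⟩, hx3⟩ := hx₀ x hx
  have hlogK : Real.log (Real.exp a) = a := Real.log_exp a
  have hlogε : Real.log (1 / Real.exp (-b)) = b := by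
    rw [one_div, Real.exp_neg, inv_inv, Real.log_exp]
  rw [hlogK, hlogε]
  -- sets
  set S := {ω | x < ξ₁ ω + ξ₂ ω} with hSdef
  set A := {ω | ξ₂ ω ≤ a} with hAdef
  set T := {ω | ξ₂ ω ≤ x - b} with hTdef
  have hS : MeasurableSet S := measurableSet_lt measurable_const (h₁.add h₂)
  have hA : MeasurableSet A := measurableSet_le h₂ measurable_const
  have hT : MeasurableSet T := measurableSet_le h₂ measurable_const
  have hGset : {ω | x < ξ₁ ω + ξ₂ ω ∧ ξ₂ ω ∈ Set.Ioc a (x - b)} = (S \ A) ∩ T := by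
    ext ω
    simp only [hSdef, hAdef, hTdef, Set.mem_setOf_eq, Set.mem_Ioc, Set.mem_inter_iff,
      Set.mem_diff, not_le]
    tauto
  rw [hGset]
  -- partition
  have e1 : μ (S ∩ A) + μ (S \ A) = μ S := measure_inter_add_diff S hA
  have e2 : μ ((S \ A) ∩ T) + μ ((S \ A) \ T) = μ (S \ A) := measure_inter_add_diff _ hT
  -- tail identities
  have Fb1 : ∀ c : ℝ, (μ (ξ₁ ⁻¹' Set.Ioi c)).toReal = Fbar c := fun c => (hFbar c).symm
  have Fb2 : ∀ c : ℝ, (μ (ξ₂ ⁻¹' Set.Ioi c)).toReal = Fbar c := by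
    intro c
    rw [← hid.measure_mem_eq measurableSet_Ioi]
    exact Fb1 c
  -- lower bound for S ∩ A
  have hLAsub : (ξ₁ ⁻¹' Set.Ioi (x - b)) ∩ (ξ₂ ⁻¹' Set.Ioc b a) ⊆ S ∩ A := by
    rintro ω ⟨hω1, hω2⟩
    simp only [Set.mem_preimage, Set.mem_Ioi, Set.mem_Ioc] at hω1 hω2
    exact ⟨by simp only [hSdef, Set.mem_setOf_eq]; linarith [hω2.1],
      by simp only [hAdef, Set.mem_setOf_eq]; exact hω2.2⟩
  have hLAmul : μ ((ξ₁ ⁻¹' Set.Ioi (x - b)) ∩ (ξ₂ ⁻¹' Set.Ioc b a))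
      = μ (ξ₁ ⁻¹' Set.Ioi (x - b)) * μ (ξ₂ ⁻¹' Set.Ioc b a) :=
    hindep.measure_inter_preimage_eq_mul _ _ measurableSet_Ioi measurableSet_Ioc
  have hIoc : (μ (ξ₂ ⁻¹' Set.Ioc b a)).toReal = Fbar b - Fbar a := by
    have hd : ξ₂ ⁻¹' Set.Ioc b a = ξ₂ ⁻¹' Set.Ioi b \ ξ₂ ⁻¹' Set.Ioi a := by
      rw [← Set.preimage_diff, Set.Ioi_diff_Ioi]
    rw [hd, measure_diff (μ := μ) (Set.preimage_mono (Set.Ioi_subset_Ioi hab))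
      ((h₂ measurableSet_Ioi).nullMeasurableSet) (measure_ne_top μ _),
      ENNReal.toReal_sub_of_le (measure_mono (μ := μ) (Set.preimage_mono (Set.Ioi_subset_Ioi hab)))
        (measure_ne_top μ _), Fb2, Fb2]
  have hLA : Fbar (x - b) * (Fbar b - Fbar a) ≤ (μ (S ∩ A)).toReal := by
    have hm := measure_mono (μ := μ) hLAsub
    have := ENNReal.toReal_mono (measure_ne_top μ _) hm
    rw [hLAmul, ENNReal.toReal_mul, Fb1, hIoc] at this
    exact this
  -- lower bound for (S \ A) \ T
  have hLBsub : (ξ₁ ⁻¹' Set.Ioi b) ∩ (ξ₂ ⁻¹' Set.Ioi (x - b)) ⊆ (S \ A) \ T := by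
    rintro ω ⟨hω1, hω2⟩
    simp only [Set.mem_preimage, Set.mem_Ioi] at hω1 hω2
    refine ⟨⟨by simp only [hSdef, Set.mem_setOf_eq]; linarith,
      by simp only [hAdef, Set.mem_setOf_eq, not_le]; linarith⟩,
      by simp only [hTdef, Set.mem_setOf_eq, not_le]; linarith⟩
  have hLBmul : μ ((ξ₁ ⁻¹' Set.Ioi b) ∩ (ξ₂ ⁻¹' Set.Ioi (x - b)))
      = μ (ξ₁ ⁻¹' Set.Ioi b) * μ (ξ₂ ⁻¹' Set.Ioi (x - b)) :=
    hindep.measure_inter_preimage_eq_mul _ _ measurableSet_Ioi measurableSet_Ioi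
  have hLB : Fbar b * Fbar (x - b) ≤ (μ ((S \ A) \ T)).toReal := by
    have hm := measure_mono (μ := μ) hLBsub
    have := ENNReal.toReal_mono (measure_ne_top μ _) hm
    rw [hLBmul, ENNReal.toReal_mul, Fb1, Fb2] at this
    exact this
  -- combine
  have esum : (μ (S ∩ A)).toReal + ((μ ((S \ A) ∩ T)).toReal + (μ ((S \ A) \ T)).toReal)
      = (μ S).toReal := by
    rw [← ENNReal.toReal_add (measure_ne_top μ _) (measure_ne_top μ _), e2,
      ← ENNReal.toReal_add (measure_ne_top μ _) (measure_ne_top μ _), e1]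
  have hpS : (μ S).toReal < (2 + η) * Fbar x :=
    (div_lt_iff₀ (hFpos x)).1 hx1
  have hFxb : (1 - η) * Fbar x < Fbar (x - b) :=
    (lt_div_iff₀ (hFpos x)).1 hx2
  have hrpos : 0 < Fbar x := hFpos x
  have hFxble : 0 < Fbar (x - b) := hFpos (x - b)
  have hFbFa : (0 : ℝ) ≤ Fbar b - Fbar a := by nlinarith
  have step1 : ((1 - η) * Fbar x) * (Fbar b - Fbar a) ≤ Fbar (x - b) * (Fbar b - Fbar a) :=
    mul_le_mul_of_nonneg_right hFxb.le hFbFa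
  have hFb0 : 0 < Fbar b := hFpos b
  have step2 : Fbar b * ((1 - η) * Fbar x) ≤ Fbar b * Fbar (x - b) :=
    mul_le_mul_of_nonneg_left hFxb.le hFb0.le
  have main : (μ ((S \ A) ∩ T)).toReal
      ≤ (2 + η) * Fbar x - ((1 - η) * Fbar x) * (Fbar b - Fbar a)
        - Fbar b * ((1 - η) * Fbar x) := by
    linarith
  refine main.trans ?_
  nlinarith [mul_pos hrpos hη0, mul_pos hrpos hδ'0, sq_nonneg η,
    mul_le_mul_of_nonneg_left hFb.le hrpos.le, mul_lt_mul_of_pos_left hFa hrpos,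
    mul_le_mul_of_nonneg_left hη8 hrpos.le, mul_nonneg hrpos.le hη0.le,
    mul_pos hη0 hrpos]
end
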